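/- arXiv:0903.4883 — 4 statements merged into one kernel-verified Lean document; each statement's English description precedes it below -/
import Mathlib

section
/- Let f be a complex function analytic on an open set containing the closed unit disk with f(0) = 0, c_d = f^{(d)}(0)/d!, and let s > 1 be real and M ≥ 1 an integer. Define the truncation error E(f, M, s) = |∑_{n=M+1}^{∞} (log ζ(ns))/n · ∑_{d|n} d · c_d · μ(n/d)|. Then E(f, M, s) ≤ (2^{s+1}(2^s + 1)(s + 1))/(π (2^s − 1)^3) · (∫_0^{2π} |f(e^{it})| dt) · M^2 / ((sM + s − 1) 2^{sM}). -/
open scoped Real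

/-- The Riemann zeta function for real argument `x > 1`, `ζ(x) = ∑_{n ≥ 1} n^{-x}`. -/
noncomputable def zetaR (x : ℝ) : ℝ := ∑' n : ℕ, ((n : ℝ) + 1) ^ (-x)

lemma zetaR_summable {x : ℝ} (hx : 1 < x) :
    Summable (fun n : ℕ => ((n : ℝ) + 1) ^ (-x)) := by
  have h : Summable (fun n : ℕ => ((n : ℝ)) ^ (-x)) :=
    Real.summable_nat_rpow.2 (by linarith)
  refine ((summable_nat_add_iff 1).2 h).congr fun n => ?_
  push_cast; ring_nf

lemma zetaR_one_le {x : ℝ} (hx : 1 < x) : 1 ≤ zetaR x := by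
  have hs := zetaR_summable hx
  have h0 : (fun n : ℕ => ((n : ℝ) + 1) ^ (-x)) 0 = 1 := by norm_num
  calc (1:ℝ) = (fun n : ℕ => ((n : ℝ) + 1) ^ (-x)) 0 := h0.symm
    _ ≤ zetaR x := Summable.le_tsum hs 0 fun m _ => Real.rpow_nonneg (by positivity) _

lemma rpow_telescope {x a : ℝ} (hx : 2 ≤ x) (ha : 1 ≤ a) :
    (x - 1) * (a + 1) ^ (-x) ≤ a ^ (1 - x) - (a + 1) ^ (1 - x) := by
  have ha0 : 0 < a := by linarith
  have hb0 : 0 < a + 1 := by linarith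
  have h1a : (0:ℝ) ≤ 1 / a := by positivity
  have key : 1 + (x - 1) * (1 / a) ≤ (1 + 1 / a) ^ (x - 1) :=
    one_add_mul_self_le_rpow_one_add (by linarith) (by linarith)
  have e1 : a ^ (1 - x) = (a + 1) ^ (1 - x) * (1 + 1 / a) ^ (x - 1) := by
    rw [show (1:ℝ) + 1 / a = (a + 1) / a by field_simp]
    rw [Real.div_rpow hb0.le ha0.le, mul_div_assoc', ← Real.rpow_add hb0,
      show (1 - x) + (x - 1) = 0 by ring, Real.rpow_zero, one_div,
      ← Real.rpow_neg ha0.le, neg_sub]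
  have e2 : (a + 1) ^ (1 - x) = (a + 1) * (a + 1) ^ (-x) := by
    rw [show (1 : ℝ) - x = 1 + (-x) by ring, Real.rpow_add hb0, Real.rpow_one]
  have hp : 0 < (a + 1) ^ (1 - x) := Real.rpow_pos_of_pos hb0 _
  have step : (x - 1) / (a + 1) ≤ (1 + 1 / a) ^ (x - 1) - 1 := by
    have : (x - 1) / (a + 1) ≤ (x - 1) * (1 / a) := by
      rw [mul_one_div]
      exact div_le_div_of_nonneg_left (by linarith) ha0 (by linarith)
    linarith
  calc (x - 1) * (a + 1) ^ (-x) = ((x - 1) / (a + 1)) * (a + 1) ^ (1 - x) := by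
        rw [e2]; field_simp
    _ ≤ ((1 + 1 / a) ^ (x - 1) - 1) * (a + 1) ^ (1 - x) :=
        mul_le_mul_of_nonneg_right step hp.le
    _ = a ^ (1 - x) - (a + 1) ^ (1 - x) := by rw [e1]; ring

lemma log_zetaR_le {x : ℝ} (hx : 2 ≤ x) :
    Real.log (zetaR x) ≤ 2 ^ (-x) * ((x + 1) / (x - 1)) := by
  have hx1 : (1:ℝ) < x := by linarith
  have hs := zetaR_summable hx1
  have hs2 : Summable (fun n : ℕ => ((n : ℝ) + 2) ^ (-x)) := by
    refine ((summable_nat_add_iff 1).2 hs).congr fun n => ?_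
    push_cast; ring_nf
  have hs3 : Summable (fun n : ℕ => ((n : ℝ) + 3) ^ (-x)) := by
    refine ((summable_nat_add_iff 1).2 hs2).congr fun n => ?_
    push_cast; ring_nf
  have e0 : zetaR x = 1 + ∑' n : ℕ, ((n : ℝ) + 2) ^ (-x) := by
    rw [zetaR, Summable.tsum_eq_zero_add hs]
    norm_num
    exact tsum_congr fun n => by push_cast; ring_nf
  have e1 : (∑' n : ℕ, ((n : ℝ) + 2) ^ (-x))
      = 2 ^ (-x) + ∑' n : ℕ, ((n : ℝ) + 3) ^ (-x) := by
    rw [Summable.tsum_eq_zero_add hs2]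
    norm_num
    exact tsum_congr fun n => by push_cast; ring_nf
  have hxm : (0:ℝ) < x - 1 := by linarith
  have tail : (∑' n : ℕ, ((n : ℝ) + 3) ^ (-x)) ≤ 2 ^ (1 - x) / (x - 1) := by
    refine Real.tsum_le_of_sum_range_le (fun n => Real.rpow_nonneg (by positivity) _)
      fun N => ?_
    set g : ℕ → ℝ := fun i => ((i : ℝ) + 2) ^ (1 - x) with hg
    have hterm : ∀ i : ℕ, ((i : ℝ) + 3) ^ (-x) ≤ (g i - g (i + 1)) / (x - 1) := by
      intro i
      rw [le_div_iff₀ hxm]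
      have := rpow_telescope hx (a := (i : ℝ) + 2) (by have := Nat.cast_nonneg (α := ℝ) i; linarith)
      have ee : ((i:ℝ) + 2) + 1 = ((i:ℝ) + 3) := by ring
      rw [ee] at this
      simp only [hg]
      push_cast
      rw [show ((i:ℝ) + 1 + 2) = ((i:ℝ) + 3) by ring]
      linarith
    calc ∑ i ∈ Finset.range N, ((i : ℝ) + 3) ^ (-x)
        ≤ ∑ i ∈ Finset.range N, (g i - g (i + 1)) / (x - 1) :=
          Finset.sum_le_sum fun i _ => hterm i
      _ = (g 0 - g N) / (x - 1) := by
          rw [← Finset.sum_div, Finset.sum_range_sub' g N]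
      _ ≤ g 0 / (x - 1) := by
          have : 0 ≤ g N := Real.rpow_nonneg (by positivity) _
          gcongr
          linarith [this]
      _ = 2 ^ (1 - x) / (x - 1) := by norm_num [hg]
  have hzpos : (0:ℝ) < zetaR x := lt_of_lt_of_le one_pos (zetaR_one_le hx1)
  have hlog : Real.log (zetaR x) ≤ zetaR x - 1 := Real.log_le_sub_one_of_pos hzpos
  have e2 : (2:ℝ) ^ (1 - x) = 2 * 2 ^ (-x) := by
    rw [show (1:ℝ) - x = 1 + (-x) by ring, Real.rpow_add two_pos, Real.rpow_one]
  have h2 : (0:ℝ) < (2:ℝ) ^ (-x) := Real.rpow_pos_of_pos two_pos _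
  calc Real.log (zetaR x) ≤ zetaR x - 1 := hlog
    _ ≤ 2 ^ (-x) + 2 ^ (1 - x) / (x - 1) := by rw [e0, e1]; linarith
    _ = 2 ^ (-x) * ((x + 1) / (x - 1)) := by rw [e2]; field_simp; ring


lemma coeff_bound {f : ℂ → ℂ} (hd : DifferentiableOn ℂ f (Metric.closedBall 0 1)) (d : ℕ) :
    ‖iteratedDeriv d f 0 / (Nat.factorial d : ℂ)‖ ≤
      (2 * π)⁻¹ * ∫ t in (0:ℝ)..(2 * π), ‖f (Complex.exp ((t : ℂ) * Complex.I))‖ := by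
  have hd' : DifferentiableOn ℂ f (Metric.closedBall 0 ((1 : NNReal) : ℝ)) := by
    simpa using hd
  have h := hd'.hasFPowerSeriesOnBall (c := 0) one_pos
  set p := cauchyPowerSeries f 0 ((1:NNReal):ℝ) with hp
  have hfac := h.factorial_smul (y := (1:ℂ)) d
  have hid : iteratedDeriv d f 0 = (Nat.factorial d : ℂ) * p d (fun _ => (1:ℂ)) := by
    rw [iteratedDeriv_eq_iteratedFDeriv, ← hfac, nsmul_eq_mul]
  have hne : (Nat.factorial d : ℂ) ≠ 0 := by
    exact_mod_cast Nat.cast_ne_zero.2 (Nat.factorial_ne_zero d)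
  have e : iteratedDeriv d f 0 / (Nat.factorial d : ℂ) = p d (fun _ => (1:ℂ)) := by
    rw [hid]; field_simp
  rw [e]
  have h1 : ‖p d (fun _ => (1:ℂ))‖ ≤ ‖p d‖ * ∏ _i : Fin d, ‖(1:ℂ)‖ :=
    (p d).le_opNorm _
  have h2 : ‖p d‖ ≤ ((2 * π)⁻¹ * ∫ t in (0:ℝ)..(2 * π), ‖f (circleMap 0 1 t)‖) * |(1:ℝ)|⁻¹ ^ d := by
    rw [hp]; simpa using norm_cauchyPowerSeries_le f 0 1 d
  have h3 : (∫ t in (0:ℝ)..(2 * π), ‖f (circleMap 0 1 t)‖)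
      = ∫ t in (0:ℝ)..(2 * π), ‖f (Complex.exp ((t : ℂ) * Complex.I))‖ := by
    congr 1
    funext t
    simp [circleMap]
  simp only [norm_one, Finset.prod_const, one_pow, mul_one, abs_one, inv_one] at h1 h2
  rw [h3] at h2
  exact h1.trans h2

lemma div_sum_bound (f : ℂ → ℂ) {C : ℝ} (hC : 0 ≤ C)
    (hcoef : ∀ d : ℕ, ‖iteratedDeriv d f 0 / (Nat.factorial d : ℂ)‖ ≤ C)
    (m : ℕ) :
    ‖∑ d ∈ m.divisors, (d : ℂ) * (iteratedDeriv d f 0 / (Nat.factorial d : ℂ)) *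
        (ArithmeticFunction.moebius (m / d) : ℂ)‖ ≤ (m : ℝ) ^ 2 * C := by
  calc ‖∑ d ∈ m.divisors, (d : ℂ) * (iteratedDeriv d f 0 / (Nat.factorial d : ℂ)) *
        (ArithmeticFunction.moebius (m / d) : ℂ)‖
      ≤ ∑ d ∈ m.divisors, ‖(d : ℂ) * (iteratedDeriv d f 0 / (Nat.factorial d : ℂ)) *
        (ArithmeticFunction.moebius (m / d) : ℂ)‖ := norm_sum_le _ _
    _ ≤ ∑ _d ∈ m.divisors, (m : ℝ) * C := by
        refine Finset.sum_le_sum fun d hd => ?_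
        rw [norm_mul, norm_mul]
        have h1 : ‖(d : ℂ)‖ ≤ (m : ℝ) := by
          rw [Complex.norm_natCast]
          have h := Nat.mem_divisors.mp hd
          exact_mod_cast Nat.le_of_dvd h.2.bot_lt h.1
        have h2 := hcoef d
        have h3 : ‖((ArithmeticFunction.moebius (m / d) : ℤ) : ℂ)‖ ≤ 1 := by
          rw [Complex.norm_intCast]
          have := ArithmeticFunction.abs_moebius_le_one (n := m / d)
          exact_mod_cast this
        calc ‖(d:ℂ)‖ * ‖iteratedDeriv d f 0 / (Nat.factorial d : ℂ)‖ *
              ‖((ArithmeticFunction.moebius (m / d) : ℤ) : ℂ)‖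
            ≤ (m : ℝ) * C * 1 := by
              apply mul_le_mul (mul_le_mul h1 h2 (norm_nonneg _) (Nat.cast_nonneg m)) h3
                (norm_nonneg _) (by positivity)
          _ = (m : ℝ) * C := mul_one _
    _ ≤ (m : ℝ) ^ 2 * C := by
        rw [Finset.sum_const, nsmul_eq_mul]
        have hcard : (m.divisors.card : ℝ) ≤ (m : ℝ) := by
          have : m.divisors ⊆ Finset.Ico 1 (m + 1) := by
            intro d hd
            rw [Finset.mem_Ico]
            have h := Nat.mem_divisors.mp hd
            exact ⟨Nat.pos_of_mem_divisors hd, Nat.lt_succ_of_le (Nat.le_of_dvd h.2.bot_lt h.1)⟩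
          have := Finset.card_le_card this
          rw [Nat.card_Ico] at this
          exact_mod_cast by simpa using this
        calc (m.divisors.card : ℝ) * ((m:ℝ) * C) ≤ (m:ℝ) * ((m:ℝ)*C) := by
              apply mul_le_mul_of_nonneg_right hcard (by positivity)
          _ = (m:ℝ)^2 * C := by ring

lemma sq_mul_geom {x : ℝ} (hx0 : 0 ≤ x) (hx1 : x < 1) :
    HasSum (fun k : ℕ => ((k : ℝ) + 1) ^ 2 * x ^ k) ((1 + x) / (1 - x) ^ 3) := by
  have hn : ‖x‖ < 1 := by rw [Real.norm_eq_abs, abs_of_nonneg hx0]; exact hx1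
  have h2 := hasSum_choose_mul_geometric_of_norm_lt_one 2 hn
  have h1 := hasSum_choose_mul_geometric_of_norm_lt_one 1 hn
  have h := (h2.mul_left 2).sub h1
  have hne : (1 - x) ≠ 0 := by intro h'; nlinarith
  convert h using 1
  · rfl
  · funext k
    rw [Nat.cast_choose_two]
    simp [Nat.choose_one_right]
    push_cast
    ring
  · field_simp
    ring

lemma helperL (u A s q : ℝ) (M : ℕ) (h1 : u ≠ 0) (h2 : u - 1 ≠ 0) (h3 : q ≠ 0)
    (hπ : (0:ℝ) < π) :
    (s+1)/q * ((2*π)⁻¹*A) * ((M:ℝ)+1)^2 * (u⁻¹)^(M+1) * ((1+u⁻¹)/(1-u⁻¹)^3)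
      = (s+1)*A*(u+1)*u/(2*π*q*(u-1)^3*u^M) * (((M:ℝ)+1)^2) := by
  have hπ' : (π:ℝ) ≠ 0 := ne_of_gt hπ
  have hum : u ^ M ≠ 0 := pow_ne_zero _ h1
  have h4 : (1 - u⁻¹) = (u - 1) / u := by field_simp
  rw [h4, show (u⁻¹)^(M+1) = (u ^ M * u)⁻¹ by rw [inv_pow, pow_succ]]
  field_simp

lemma helperR (u A s q : ℝ) (M : ℕ) (h1 : u ≠ 0) (h2 : u - 1 ≠ 0) (h3 : q ≠ 0)
    (hπ : (0:ℝ) < π) :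
    2 * u * (u + 1) * (s + 1) / (π * (u - 1) ^ 3) * A * (M:ℝ) ^ 2 / (q * u ^ M)
      = (s+1)*A*(u+1)*u/(2*π*q*(u-1)^3*u^M) * (4 * (M:ℝ) ^ 2) := by
  have hπ' : (π:ℝ) ≠ 0 := ne_of_gt hπ
  have hum : u ^ M ≠ 0 := pow_ne_zero _ h1
  field_simp
  ring

set_option maxHeartbeats 2000000 in
/-- Truncation-error bound for the expansion of `∑_p f(p^{-s})`:
the tail `E(f,M,s) = |∑_{n > M} (log ζ(ns))/n · ∑_{d∣n} d·c_d·μ(n/d)|` satisfies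
`E(f,M,s) ≤ 2^{s+1}(2^s+1)(s+1)/(π(2^s-1)^3) · (∫_0^{2π}|f(e^{it})|dt) · M²/((sM+s-1)2^{sM})`. -/
theorem statement2 (f : ℂ → ℂ) (U : Set ℂ) (hU : IsOpen U)
    (hUball : Metric.closedBall (0 : ℂ) 1 ⊆ U)
    (hf : AnalyticOnNhd ℂ f U) (hf0 : f 0 = 0)
    (s : ℝ) (hs : 1 < s) (M : ℕ) (hM : 1 ≤ M) :
    Summable
      (fun n : ℕ =>
        ((Real.log (zetaR (((n : ℝ) + M + 1) * s)) / ((n : ℝ) + M + 1) : ℝ) : ℂ) *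
          ∑ d ∈ (n + M + 1).divisors,
            (d : ℂ) * (iteratedDeriv d f 0 / (Nat.factorial d : ℂ)) *
              (ArithmeticFunction.moebius ((n + M + 1) / d) : ℂ)) ∧
    ‖∑' n : ℕ,
        ((Real.log (zetaR (((n : ℝ) + M + 1) * s)) / ((n : ℝ) + M + 1) : ℝ) : ℂ) *
          ∑ d ∈ (n + M + 1).divisors,
            (d : ℂ) * (iteratedDeriv d f 0 / (Nat.factorial d : ℂ)) *
              (ArithmeticFunction.moebius ((n + M + 1) / d) : ℂ)‖ ≤
      (2 : ℝ) ^ (s + 1) * ((2 : ℝ) ^ s + 1) * (s + 1) / (π * ((2 : ℝ) ^ s - 1) ^ 3) *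
        (∫ t in (0 : ℝ)..(2 * π), ‖f (Complex.exp ((t : ℂ) * Complex.I))‖) *
        (M : ℝ) ^ 2 / ((s * M + s - 1) * (2 : ℝ) ^ (s * M)) := by
  have hπ : (0:ℝ) < π := Real.pi_pos
  set A := ∫ t in (0:ℝ)..(2 * π), ‖f (Complex.exp ((t : ℂ) * Complex.I))‖ with hA
  have hA0 : 0 ≤ A := by
    apply intervalIntegral.integral_nonneg (by positivity)
    intro t _; positivity
  have hdball : DifferentiableOn ℂ f (Metric.closedBall 0 1) := fun z hz =>
    ((hf z (hUball hz)).differentiableAt).differentiableWithinAt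
  set C := (2 * π)⁻¹ * A with hCdef
  have hC0 : 0 ≤ C := by positivity
  have hcoef : ∀ d : ℕ, ‖iteratedDeriv d f 0 / (Nat.factorial d : ℂ)‖ ≤ C :=
    coeff_bound hdball
  set u := (2:ℝ) ^ s with hu
  have hu2 : 2 < u := by
    rw [hu]
    calc (2:ℝ) = 2 ^ (1:ℝ) := (Real.rpow_one 2).symm
      _ < 2 ^ s := (Real.rpow_lt_rpow_left_iff (by norm_num : (1:ℝ) < 2)).2 hs
  have hu0 : 0 < u := by linarith
  set x := (2:ℝ) ^ (-s) with hx
  have hxu : x = u⁻¹ := by rw [hx, hu, Real.rpow_neg (by norm_num)]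
  have hx0 : 0 < x := Real.rpow_pos_of_pos (by norm_num) _
  have hx1 : x < 1 := by
    rw [hxu]
    rw [inv_lt_one_iff₀]; right; linarith
  have hQ : (0:ℝ) < s * M + s - 1 := by
    have : (1:ℝ) ≤ (M:ℝ) := by exact_mod_cast hM
    nlinarith
  set K := (s + 1) / (s * M + s - 1) * C with hK
  have hK0 : 0 ≤ K := by positivity
  -- the summand
  set g : ℕ → ℂ := fun n =>
    ((Real.log (zetaR (((n : ℝ) + M + 1) * s)) / ((n : ℝ) + M + 1) : ℝ) : ℂ) *
      ∑ d ∈ (n + M + 1).divisors,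
        (d : ℂ) * (iteratedDeriv d f 0 / (Nat.factorial d : ℂ)) *
          (ArithmeticFunction.moebius ((n + M + 1) / d) : ℂ) with hg
  set b : ℕ → ℝ := fun n => ((n : ℝ) + 1) ^ 2 * x ^ n with hb
  set D := K * ((M:ℝ) + 1) ^ 2 * x ^ (M + 1) with hD
  have hD0 : 0 ≤ D := by positivity
  have key : ∀ n : ℕ, ‖g n‖ ≤ D * b n := by
    intro n
    have hm1 : (1:ℝ) ≤ (M:ℝ) := by exact_mod_cast hM
    have hn2 : (2:ℝ) ≤ (n:ℝ) + M + 1 := by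
      have : (0:ℝ) ≤ (n:ℝ) := Nat.cast_nonneg n
      linarith
    set N : ℝ := (n : ℝ) + M + 1 with hN
    set X : ℝ := N * s with hX
    have hX2 : 2 ≤ X := by
      calc (2:ℝ) = 2 * 1 := by ring
        _ ≤ N * s := by
          apply mul_le_mul hn2 hs.le zero_le_one (by linarith)
    have hX1 : 1 < X := by linarith
    have hlog0 : 0 ≤ Real.log (zetaR X) := Real.log_nonneg (zetaR_one_le hX1)
    have hN0 : 0 < N := by linarith
    -- norm of first factor
    have e1 : ‖((Real.log (zetaR X) / N : ℝ) : ℂ)‖ = Real.log (zetaR X) / N := by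
      rw [Complex.norm_real, Real.norm_eq_abs, abs_of_nonneg (by positivity)]
    have hSb : ‖∑ d ∈ (n + M + 1).divisors,
        (d : ℂ) * (iteratedDeriv d f 0 / (Nat.factorial d : ℂ)) *
          (ArithmeticFunction.moebius ((n + M + 1) / d) : ℂ)‖ ≤ N ^ 2 * C := by
      have := div_sum_bound f hC0 hcoef (n + M + 1)
      have hcast : ((n + M + 1 : ℕ) : ℝ) = N := by push_cast [hN]; ring
      rwa [hcast] at this
    have hx2X : x ^ (n + M + 1) = (2:ℝ) ^ (-X) := by
      rw [hx, ← Real.rpow_natCast ((2:ℝ) ^ (-s)) (n + M + 1),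
        ← Real.rpow_mul (by norm_num : (0:ℝ) ≤ 2)]
      congr 1
      push_cast [hX, hN]
      ring
    have hlogle : Real.log (zetaR X) ≤ x ^ (n + M + 1) * ((X + 1) / (X - 1)) := by
      rw [hx2X]; exact log_zetaR_le hX2
    have hfrac : (X + 1) / (X - 1) ≤ N * (s + 1) / (s * M + s - 1) := by
      apply div_le_div₀ (by positivity)
      · rw [hX]; ring_nf; linarith
      · exact hQ
      · rw [hX]
        have hms : ((M:ℝ) + 1) * s ≤ N * s := by
          apply mul_le_mul_of_nonneg_right _ (by linarith)
          have := Nat.cast_nonneg (α := ℝ) n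
          linarith
        ring_nf at hms ⊢
        linarith
    calc ‖g n‖ = Real.log (zetaR X) / N * ‖∑ d ∈ (n + M + 1).divisors,
          (d : ℂ) * (iteratedDeriv d f 0 / (Nat.factorial d : ℂ)) *
            (ArithmeticFunction.moebius ((n + M + 1) / d) : ℂ)‖ := by
          rw [hg]; simp only [norm_mul]; rw [e1]
      _ ≤ Real.log (zetaR X) / N * (N ^ 2 * C) := by
          apply mul_le_mul_of_nonneg_left hSb (by positivity)
      _ = Real.log (zetaR X) * (N * C) := by field_simp
      _ ≤ x ^ (n + M + 1) * ((X + 1) / (X - 1)) * (N * C) := by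
          apply mul_le_mul_of_nonneg_right hlogle (by positivity)
      _ ≤ x ^ (n + M + 1) * (N * (s + 1) / (s * M + s - 1)) * (N * C) := by
          apply mul_le_mul_of_nonneg_right
            (mul_le_mul_of_nonneg_left hfrac (by positivity)) (by positivity)
      _ = K * (N ^ 2 * x ^ (n + M + 1)) := by rw [hK]; field_simp
      _ ≤ D * b n := by
          rw [hD, hb]
          have hNle : N ≤ ((M:ℝ) + 1) * ((n:ℝ) + 1) := by rw [hN]; nlinarith [Nat.cast_nonneg (α := ℝ) n]
          have hNsq : N ^ 2 ≤ (((M:ℝ) + 1) * ((n:ℝ) + 1)) ^ 2 := by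
            apply pow_le_pow_left₀ hN0.le hNle
          have hxsplit : x ^ (n + M + 1) = x ^ (M + 1) * x ^ n := by
            rw [← pow_add]; ring_nf
          calc K * (N ^ 2 * x ^ (n + M + 1))
              ≤ K * ((((M:ℝ) + 1) * ((n:ℝ) + 1)) ^ 2 * x ^ (n + M + 1)) := by
                apply mul_le_mul_of_nonneg_left
                  (mul_le_mul_of_nonneg_right hNsq (by positivity)) hK0
            _ = K * ((M:ℝ) + 1) ^ 2 * x ^ (M + 1) * (((n:ℝ) + 1) ^ 2 * x ^ n) := by
                rw [hxsplit]; ring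
  have hbsum : HasSum (fun n => D * b n) (D * ((1 + x) / (1 - x) ^ 3)) :=
    (sq_mul_geom hx0.le hx1).mul_left D
  have hsummable : Summable g := Summable.of_norm_bounded hbsum.summable key
  refine ⟨hsummable, ?_⟩
  have hnorm : ‖∑' n, g n‖ ≤ D * ((1 + x) / (1 - x) ^ 3) := tsum_of_norm_bounded hbsum key
  refine hnorm.trans ?_
  -- final arithmetic
  have hum : (0:ℝ) < u ^ M := by positivity
  have h2s1 : (2:ℝ) ^ (s + 1) = 2 * u := by
    rw [hu, Real.rpow_add (by norm_num), Real.rpow_one]; ring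
  have h2sM : (2:ℝ) ^ (s * M) = u ^ M := by
    rw [hu, ← Real.rpow_natCast ((2:ℝ) ^ s) M, ← Real.rpow_mul (by norm_num : (0:ℝ) ≤ 2)]
  rw [h2s1, h2sM]
  clear_value A C K D x u
  clear key hbsum hnorm hsummable hcoef hdball hf hf0 hU hUball hg hb g b
  obtain ⟨c, hc⟩ : ∃ c : ℝ, c = (s + 1) * A * (u + 1) * u /
      (2 * π * (s * M + s - 1) * (u - 1) ^ 3 * u ^ M) := ⟨_, rfl⟩
  have hc0 : 0 ≤ c := by
    rw [hc]
    apply div_nonneg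
    · have : 0 < u + 1 := by linarith
      positivity
    · have : 0 < u - 1 := by linarith
      positivity
  have hLHS : D * ((1 + x) / (1 - x) ^ 3) = c * ((M:ℝ) + 1) ^ 2 := by
    rw [hD, hK, hCdef, hc, hxu]
    exact helperL u A s _ M (by linarith) (by linarith) (by linarith) hπ
  have hRHS : 2 * u * (u + 1) * (s + 1) / (π * (u - 1) ^ 3) * A * (M:ℝ) ^ 2 /
      ((s * M + s - 1) * u ^ M) = c * (4 * (M:ℝ) ^ 2) := by
    rw [hc]
    exact helperR u A s _ M (by linarith) (by linarith) (by linarith) hπ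
  rw [hLHS, hRHS]
  apply mul_le_mul_of_nonneg_left _ hc0
  have hm1 : (1:ℝ) ≤ (M:ℝ) := by exact_mod_cast hM
  nlinarith
end

section
/- Let f be a complex function analytic on an open set containing the closed unit disk with f(0) = 0, and write c_d = f^{(d)}(0)/d!. Then for every real s > 1, ∑_{p prime} f'(p^{−s}) · p^{−s} · log p = −∑_{n=1}^{∞} (ζ'(ns)/ζ(ns)) · ∑_{d | n} d · c_d · μ(n/d), where both series converge. -/
open ArithmeticFunction

section Aux

/-- `d` times the `d`-th Taylor coefficient of `f` at `0`. -/
noncomputable def aaCoeff (f : ℂ → ℂ) (d : ℕ) : ℂ :=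
  (d : ℂ) * (iteratedDeriv d f 0 / (Nat.factorial d : ℂ))

/-- The Möbius transform of `aaCoeff`. -/
noncomputable def bbCoeff (f : ℂ → ℂ) (m : ℕ) : ℂ :=
  ∑ d ∈ m.divisors,
    (d : ℂ) * (iteratedDeriv d f 0 / (Nat.factorial d : ℂ)) *
      (ArithmeticFunction.moebius (m / d) : ℂ)

lemma sum_bbCoeff (f : ℂ → ℂ) : ∀ k > 0, ∑ m ∈ Nat.divisors k, bbCoeff f m = aaCoeff f k := by
  rw [ArithmeticFunction.sum_eq_iff_sum_mul_moebius_eq]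
  intro n hn
  rw [Nat.sum_divisorsAntidiagonal' (f := fun i j => (moebius i : ℂ) * aaCoeff f j)]
  unfold bbCoeff aaCoeff
  refine Finset.sum_congr rfl fun d hd => by ring

lemma norm_moebius_le_one (m : ℕ) : ‖(ArithmeticFunction.moebius m : ℂ)‖ ≤ 1 := by
  by_cases h : Squarefree m
  · rw [ArithmeticFunction.moebius_apply_of_squarefree h]
    push_cast
    rw [norm_pow, norm_neg, norm_one, one_pow]
  · rw [ArithmeticFunction.moebius_eq_zero_of_not_squarefree h]
    simp

lemma hasSum_aaCoeff {f : ℂ → ℂ} {r : ℝ}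
    (hd : DifferentiableOn ℂ (deriv f) (Metric.ball 0 r)) {z : ℂ} (hz : ‖z‖ < r) :
    HasSum (fun d => aaCoeff f d * z ^ d) (deriv f z * z) := by
  have H := Complex.hasSum_taylorSeries_on_ball hd (by simpa [Metric.mem_ball] using hz)
  have H' := H.mul_right z
  have key : ∀ n : ℕ, ((Nat.factorial n : ℂ)⁻¹ • (z - 0) ^ n • iteratedDeriv n (deriv f) 0) * z
      = aaCoeff f (n + 1) * z ^ (n + 1) := by
    intro n
    rw [← iteratedDeriv_succ']
    have hfac : (Nat.factorial (n+1) : ℂ) = (n+1) * Nat.factorial n := by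
      push_cast [Nat.factorial_succ]; ring
    have h0 : (Nat.factorial n : ℂ) ≠ 0 := Nat.cast_ne_zero.mpr (Nat.factorial_ne_zero n)
    have h1 : ((n:ℂ)+1) ≠ 0 := by
      have := Nat.cast_add_one_ne_zero (R := ℂ) n
      simpa using this
    unfold aaCoeff
    rw [hfac]
    simp only [sub_zero, smul_eq_mul]
    push_cast
    field_simp
    ring
  rw [funext key] at H'
  have := (hasSum_nat_add_iff (f := fun d => aaCoeff f d * z ^ d) 1).mp H'
  simpa [aaCoeff] using this

lemma exists_bound_aaCoeff {f : ℂ → ℂ} {r : ℝ} (hr : 1 < r)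
    (hd : DifferentiableOn ℂ (deriv f) (Metric.ball 0 r)) :
    ∃ C : ℝ, 0 ≤ C ∧ ∀ d, ‖aaCoeff f d‖ ≤ C := by
  set t : ℝ := (1 + r) / 2 with ht
  have ht1 : 1 < t := by simp only [ht]; linarith
  have htr : t < r := by simp only [ht]; linarith
  have h := hasSum_aaCoeff hd (z := (t : ℂ)) (by
    rw [Complex.norm_real, Real.norm_eq_abs, abs_of_pos (by linarith)]; exact htr)
  have h2 : Filter.Tendsto (fun d => ‖aaCoeff f d * (t:ℂ) ^ d‖) Filter.atTop (nhds 0) := by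
    simpa using (h.summable.tendsto_atTop_zero.norm)
  obtain ⟨C, hC⟩ := (h2.isBoundedUnder_le).bddAbove_range
  refine ⟨C, le_trans (norm_nonneg _) (hC ⟨0, rfl⟩), fun d => ?_⟩
  have h3 : ‖aaCoeff f d * (t:ℂ) ^ d‖ ≤ C := hC ⟨d, rfl⟩
  have h4 : ‖aaCoeff f d * (t:ℂ) ^ d‖ = ‖aaCoeff f d‖ * t ^ d := by
    rw [norm_mul, norm_pow, Complex.norm_real, Real.norm_eq_abs, abs_of_pos (by linarith)]
  nlinarith [norm_nonneg (aaCoeff f d), one_le_pow₀ ht1.le (n := d),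
    pow_pos (show (0:ℝ) < t by linarith) d]

lemma norm_bbCoeff_le {f : ℂ → ℂ} {C : ℝ} (hC : ∀ d, ‖aaCoeff f d‖ ≤ C) (m : ℕ) :
    ‖bbCoeff f m‖ ≤ C * (m + 1) := by
  have h0 : 0 ≤ C := le_trans (norm_nonneg _) (hC 0)
  calc ‖bbCoeff f m‖ ≤ ∑ d ∈ m.divisors, ‖(d : ℂ) * (iteratedDeriv d f 0 / (Nat.factorial d : ℂ)) *
      (ArithmeticFunction.moebius (m / d) : ℂ)‖ := norm_sum_le _ _
    _ ≤ ∑ d ∈ m.divisors, C := by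
        refine Finset.sum_le_sum fun d _ => ?_
        rw [norm_mul]
        calc ‖(d : ℂ) * (iteratedDeriv d f 0 / (Nat.factorial d : ℂ))‖ * ‖(moebius (m / d) : ℂ)‖
            ≤ C * 1 := by
              refine mul_le_mul (hC d) (norm_moebius_le_one _) (norm_nonneg _) h0
          _ = C := mul_one C
    _ ≤ (m + 1) * C := by
        rw [Finset.sum_const, nsmul_eq_mul]
        refine mul_le_mul_of_nonneg_right ?_ h0
        have := (Nat.divisors m).card_le_card (Finset.subset_iff.mpr
          (fun d hd => Finset.mem_range.mpr (Nat.lt_succ_of_le (Nat.divisor_le hd))))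
        calc ((Nat.divisors m).card : ℝ) ≤ ((Finset.range (m+1)).card : ℝ) := by exact_mod_cast this
          _ = (m + 1 : ℝ) := by simp
    _ = C * (m + 1) := by ring

lemma hasSum_prime_fiber {f : ℂ → ℂ} {r : ℝ}
    (hd : DifferentiableOn ℂ (deriv f) (Metric.ball 0 r))
    {C : ℝ} (hC : ∀ d, ‖aaCoeff f d‖ ≤ C)
    {y : ℝ} (hy0 : 0 ≤ y) (hy1 : y < 1) (hyr : y < r) :
    HasSum (fun jn : ℕ × ℕ => bbCoeff f (jn.2 + 1) * (y : ℂ) ^ ((jn.1 + 1) * (jn.2 + 1)))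
      (deriv f (y : ℂ) * (y : ℂ)) := by
  have hC0 : 0 ≤ C := le_trans (norm_nonneg _) (hC 0)
  set u : ℕ × ℕ → ℂ := fun jn => bbCoeff f (jn.2 + 1) * (y : ℂ) ^ ((jn.1 + 1) * (jn.2 + 1))
    with hu
  have hv1 : Summable (fun j : ℕ => y ^ (j + 1)) := by
    have := (summable_geometric_of_lt_one hy0 hy1).mul_left y
    refine this.congr fun j => (pow_succ' y j).symm
  have hv2 : Summable (fun n : ℕ => C * ((n : ℝ) + 2) * y ^ n) := by
    have h1 : Summable (fun n : ℕ => (n : ℝ) ^ 1 * y ^ n) :=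
      summable_pow_mul_geometric_of_norm_lt_one 1
        (by rw [Real.norm_eq_abs, abs_of_nonneg hy0]; exact hy1)
    have h2 := (summable_geometric_of_lt_one hy0 hy1).mul_left 2
    refine ((h1.add h2).mul_left C).congr fun n => by ring
  have hprod : Summable (fun jn : ℕ × ℕ => (y ^ (jn.1 + 1)) * (C * ((jn.2 : ℝ) + 2) * y ^ jn.2)) :=
    hv1.mul_of_nonneg hv2 (fun j => pow_nonneg hy0 _) (fun n => by positivity)
  have hbound : ∀ jn : ℕ × ℕ, ‖u jn‖ ≤ (y ^ (jn.1 + 1)) * (C * ((jn.2 : ℝ) + 2) * y ^ jn.2) := by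
    rintro ⟨j, n⟩
    have h1 : ‖u (j, n)‖ = ‖bbCoeff f (n + 1)‖ * y ^ ((j + 1) * (n + 1)) := by
      rw [hu]
      simp only [norm_mul, norm_pow, Complex.norm_real, Real.norm_eq_abs, abs_of_nonneg hy0]
    have h2 : y ^ ((j + 1) * (n + 1)) ≤ y ^ (j + 1) * y ^ n := by
      rw [← pow_add]
      refine pow_le_pow_of_le_one hy0 hy1.le ?_
      have : (j + 1) * (n + 1) = j * n + (j + 1 + n) := by ring
      omega
    have h3 : ‖bbCoeff f (n + 1)‖ ≤ C * ((n : ℝ) + 2) := by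
      have := norm_bbCoeff_le hC (n + 1)
      push_cast at this ⊢
      linarith
    calc ‖u (j, n)‖ = ‖bbCoeff f (n + 1)‖ * y ^ ((j + 1) * (n + 1)) := h1
      _ ≤ (C * ((n : ℝ) + 2)) * (y ^ (j + 1) * y ^ n) := by
          refine mul_le_mul h3 h2 (by positivity) (by positivity)
      _ = (y ^ (j + 1)) * (C * ((n : ℝ) + 2) * y ^ n) := by ring
  have hus : Summable u := Summable.of_norm_bounded hprod hbound
  have huS : HasSum u (∑' jn, u jn) := hus.hasSum
  set U : ℕ × ℕ → ℂ := fun md =>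
    if md.1 = 0 ∨ md.2 = 0 then 0 else bbCoeff f md.2 * (y : ℂ) ^ (md.1 * md.2) with hU
  have hinj : Function.Injective (fun jn : ℕ × ℕ => (jn.1 + 1, jn.2 + 1)) := by
    rintro ⟨a, b⟩ ⟨c, d⟩ h
    simp only [Prod.ext_iff] at h ⊢
    omega
  have hvanish : ∀ md ∉ Set.range (fun jn : ℕ × ℕ => (jn.1 + 1, jn.2 + 1)), U md = 0 := by
    rintro ⟨m, d⟩ hmd
    by_cases h : m = 0 ∨ d = 0
    · simp [hU, h]
    · push_neg at h
      exact absurd ⟨(m - 1, d - 1), by simp only [Prod.ext_iff]; omega⟩ hmd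
  have hcomp : (U ∘ fun jn : ℕ × ℕ => (jn.1 + 1, jn.2 + 1)) = u := by
    funext jn
    simp [hU, hu]
  have hUS : HasSum U (∑' jn, u jn) := (hinj.hasSum_iff hvanish).mp (by rw [hcomp]; exact huS)
  have hfib := hUS.tsum_fiberwise (fun md => md.1 * md.2)
  have hfib_eq : ∀ k : ℕ,
      (∑' x : (fun md : ℕ × ℕ => md.1 * md.2) ⁻¹' {k}, U x) = aaCoeff f k * (y : ℂ) ^ k := by
    intro k
    rcases Nat.eq_zero_or_pos k with rfl | hk
    · have hz : ∀ x : (fun md : ℕ × ℕ => md.1 * md.2) ⁻¹' {(0:ℕ)}, U x.val = 0 := by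
        rintro ⟨⟨m, d⟩, hx⟩
        simp only [Set.mem_preimage, Set.mem_singleton_iff, Nat.mul_eq_zero] at hx
        simp [hU, hx]
      rw [tsum_congr hz, tsum_zero]
      simp [aaCoeff]
    · have hk0 : k ≠ 0 := hk.ne'
      have hset : (fun md : ℕ × ℕ => md.1 * md.2) ⁻¹' {k} = ↑(Nat.divisorsAntidiagonal k) := by
        ext ⟨m, d⟩
        simp [Nat.mem_divisorsAntidiagonal, hk0, eq_comm]
      rw [hset, Finset.tsum_subtype' (Nat.divisorsAntidiagonal k) U]
      have hterm : ∀ x ∈ Nat.divisorsAntidiagonal k, U x = bbCoeff f x.2 * (y : ℂ) ^ k := by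
        rintro ⟨m, d⟩ hx
        obtain ⟨hm, hd⟩ := Nat.ne_zero_of_mem_divisorsAntidiagonal hx
        have hmd : m * d = k := (Nat.mem_divisorsAntidiagonal.mp hx).1
        simp [hU, hm, hd, hmd]
      rw [Finset.sum_congr rfl hterm,
        Nat.sum_divisorsAntidiagonal' (f := fun _ d => bbCoeff f d * (y : ℂ) ^ k),
        ← Finset.sum_mul, sum_bbCoeff f k hk]
  rw [funext hfib_eq] at hfib
  have hA : HasSum (fun k => aaCoeff f k * (y : ℂ) ^ k) (deriv f (y : ℂ) * (y : ℂ)) := by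
    refine hasSum_aaCoeff hd ?_
    rw [Complex.norm_real, Real.norm_eq_abs, abs_of_nonneg hy0]
    exact hyr
  rwa [hfib.unique hA] at huS

end Aux

/-- The derivative of the (real) Riemann zeta function. -/
noncomputable def zetaDerivR (x : ℝ) : ℝ := deriv zetaR x

section Zeta

lemma zetaR_coe {x : ℝ} (hx : 1 < x) : ((zetaR x : ℝ) : ℂ) = riemannZeta x := by
  rw [zeta_eq_tsum_one_div_nat_add_one_cpow (by simpa using hx)]
  rw [zetaR, Complex.ofReal_tsum]
  refine tsum_congr fun n => ?_
  have hpos : (0:ℝ) < (n : ℝ) + 1 := by positivity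
  rw [Real.rpow_neg hpos.le, Complex.ofReal_inv, ← one_div]
  congr 1
  rw [Complex.ofReal_cpow hpos.le]
  push_cast
  ring_nf

lemma zetaR_eventually {x : ℝ} (hx : 1 < x) :
    ∀ᶠ t in nhds x, zetaR t = (riemannZeta (t : ℂ)).re := by
  filter_upwards [eventually_gt_nhds hx] with t ht
  rw [← zetaR_coe ht, Complex.ofReal_re]

lemma zetaDerivR_coe {x : ℝ} (hx : 1 < x) : ((zetaDerivR x : ℝ) : ℂ) = deriv riemannZeta x := by
  have hx1 : (x : ℂ) ≠ 1 := by
    intro h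
    have := congrArg Complex.re h
    simp at this; linarith
  have hζ : HasDerivAt riemannZeta (deriv riemannZeta x) x :=
    (differentiableAt_riemannZeta hx1).hasDerivAt
  have hre : HasDerivAt (fun t : ℝ => (riemannZeta (t : ℂ)).re) (deriv riemannZeta x).re x :=
    hζ.real_of_complex
  have hzre : HasDerivAt zetaR (deriv riemannZeta x).re x :=
    hre.congr_of_eventuallyEq (zetaR_eventually hx)
  have h1 : zetaDerivR x = (deriv riemannZeta x).re := hzre.deriv
  have him : HasDerivAt (fun t : ℝ => ((-Complex.I * riemannZeta (t : ℂ))).re)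
      (-Complex.I * deriv riemannZeta x).re x :=
    (hζ.const_mul (-Complex.I)).real_of_complex
  have hzero : HasDerivAt (fun _ : ℝ => (0 : ℝ)) (-Complex.I * deriv riemannZeta x).re x := by
    refine him.congr_of_eventuallyEq ?_
    filter_upwards [eventually_gt_nhds hx] with t ht
    rw [← zetaR_coe ht]
    simp [Complex.mul_re]
  have h2 : (-Complex.I * deriv riemannZeta x).re = 0 := by
    have := (hasDerivAt_const x (0:ℝ)).unique hzero
    linarith [this]
  have h3 : (deriv riemannZeta x).im = 0 := by
    simpa [Complex.mul_re] using h2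
  rw [h1]
  exact Complex.ext (by simp) (by simp [h3])

lemma zeta_ratio_eq {x : ℝ} (hx : 1 < x) :
    ((zetaDerivR x / zetaR x : ℝ) : ℂ) = -(LSeries (fun m => ((Λ m : ℝ) : ℂ)) (x : ℂ)) := by
  have h := ArithmeticFunction.LSeries_vonMangoldt_eq_deriv_riemannZeta_div
    (s := (x : ℂ)) (by simpa using hx)
  rw [Complex.ofReal_div, zetaR_coe hx, zetaDerivR_coe hx, h]
  ring

lemma term_vonMangoldt_eq (t : ℝ) (k : ℕ) :
    LSeries.term (fun m => ((Λ m : ℝ) : ℂ)) (t : ℂ) k = (((Λ k) * (k : ℝ) ^ (-t) : ℝ) : ℂ) := by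
  rcases Nat.eq_zero_or_pos k with rfl | hk
  · simp [LSeries.term]
  · have hk0 : k ≠ 0 := hk.ne'
    rw [LSeries.term_of_ne_zero hk0]
    have hkpos : (0:ℝ) < (k:ℝ) := by exact_mod_cast hk
    rw [show ((k:ℕ):ℂ) ^ (t:ℂ) = (((k:ℝ) ^ t : ℝ) : ℂ) by
      rw [Complex.ofReal_cpow hkpos.le]; push_cast; ring_nf]
    rw [Real.rpow_neg hkpos.le]
    push_cast
    rw [div_eq_mul_inv]

end Zeta

set_option maxHeartbeats 1600000 in
/-- For `f` analytic on a neighbourhood of the closed unit disk with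
`f 0 = 0` and every real `s > 1`,
`∑_{p prime} f'(p^{-s})·p^{-s}·log p = -∑_{n ≥ 1} (ζ'(ns)/ζ(ns)) · ∑_{d∣n} d·c_d·μ(n/d)`,
both series converging. -/
theorem statement3 (f : ℂ → ℂ) (U : Set ℂ) (hU : IsOpen U)
    (hUball : Metric.closedBall (0 : ℂ) 1 ⊆ U)
    (hf : AnalyticOnNhd ℂ f U) (hf0 : f 0 = 0)
    (s : ℝ) (hs : 1 < s) :
    Summable
      (fun p : Nat.Primes =>
        deriv f ((((p : ℕ) : ℝ) ^ (-s) : ℝ) : ℂ) * ((((p : ℕ) : ℝ) ^ (-s) : ℝ) : ℂ) *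
          (Real.log ((p : ℕ) : ℝ) : ℂ)) ∧
    HasSum
      (fun n : ℕ =>
        ((zetaDerivR (((n : ℝ) + 1) * s) / zetaR (((n : ℝ) + 1) * s) : ℝ) : ℂ) *
          ∑ d ∈ (n + 1).divisors,
            (d : ℂ) * (iteratedDeriv d f 0 / (Nat.factorial d : ℂ)) *
              (ArithmeticFunction.moebius ((n + 1) / d) : ℂ))
      (-(∑' p : Nat.Primes,
          deriv f ((((p : ℕ) : ℝ) ^ (-s) : ℝ) : ℂ) * ((((p : ℕ) : ℝ) ^ (-s) : ℝ) : ℂ) *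
            (Real.log ((p : ℕ) : ℝ) : ℂ))) := by
  classical
  -- a radius r > 1 on which f is analytic
  obtain ⟨δ, hδ, hsub⟩ := (isCompact_closedBall (0:ℂ) 1).exists_thickening_subset_open hU hUball
  set r : ℝ := δ + 1 with hrdef
  have hr : 1 < r := by simp only [hrdef]; linarith
  have hball : Metric.ball (0:ℂ) r ⊆ U := by
    rw [hrdef, ← thickening_closedBall hδ zero_le_one (0:ℂ)]
    exact hsub
  have hfan : AnalyticOnNhd ℂ f (Metric.ball 0 r) := hf.mono hball
  have hd : DifferentiableOn ℂ (deriv f) (Metric.ball 0 r) := hfan.deriv.differentiableOn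
  obtain ⟨C, hC0, hC⟩ := exists_bound_aaCoeff hr hd
  have hs0 : 0 < s := by linarith
  -- basic facts about k ^ (-s)
  set β : ℝ := (2:ℝ) ^ (-s) with hβ
  have hβ0 : 0 < β := Real.rpow_pos_of_pos two_pos _
  have hβ1 : β < 1 := by
    rw [hβ]
    exact Real.rpow_lt_one_of_one_lt_of_neg one_lt_two (by linarith)
  have hxnn : ∀ k : ℕ, 0 ≤ (k:ℝ) ^ (-s) := fun k => Real.rpow_nonneg k.cast_nonneg _
  have hxle : ∀ k : ℕ, 2 ≤ k → (k:ℝ) ^ (-s) ≤ β := by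
    intro k hk
    rw [hβ, Real.rpow_neg k.cast_nonneg,
      Real.rpow_neg (show (0:ℝ) ≤ 2 by norm_num)]
    have h2k : (2:ℝ) ≤ (k:ℝ) := by exact_mod_cast hk
    have h2 := Real.rpow_le_rpow (show (0:ℝ) ≤ 2 by norm_num) h2k hs0.le
    exact inv_anti₀ (Real.rpow_pos_of_pos (by norm_num) _) h2
  -- real power identity
  have hpow : ∀ (k : ℕ) (n : ℕ), ((k:ℝ) ^ (-s)) ^ n = (k:ℝ) ^ (-(s * n)) := by
    intro k n
    rw [← Real.rpow_natCast ((k:ℝ) ^ (-s)) n, ← Real.rpow_mul k.cast_nonneg]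
    ring_nf
  -- the master double series
  set g : ℕ × ℕ → ℂ := fun nk =>
    bbCoeff f (nk.1 + 1) * ((Λ nk.2 : ℝ) : ℂ) * (((nk.2 : ℝ) ^ (-s) : ℝ) : ℂ) ^ (nk.1 + 1)
    with hg
  -- summability of Λ k * k ^ (-s)
  have hΛs : LSeriesSummable (fun m => ((Λ m : ℝ) : ℂ)) (s : ℂ) :=
    ArithmeticFunction.LSeriesSummable_vonMangoldt (by simpa using hs)
  have hu : Summable (fun k : ℕ => Λ k * (k:ℝ) ^ (-s)) := by
    have h2 : Summable (fun k => (((Λ k) * (k:ℝ) ^ (-s) : ℝ) : ℂ)) :=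
      hΛs.congr fun k => term_vonMangoldt_eq s k
    exact Complex.summable_ofReal.mp h2
  have hv2 : Summable (fun n : ℕ => C * ((n : ℝ) + 2) * β ^ n) := by
    have h1 : Summable (fun n : ℕ => (n : ℝ) ^ 1 * β ^ n) :=
      summable_pow_mul_geometric_of_norm_lt_one 1
        (by rw [Real.norm_eq_abs, abs_of_nonneg hβ0.le]; exact hβ1)
    have h2 := (summable_geometric_of_lt_one hβ0.le hβ1).mul_left 2
    refine ((h1.add h2).mul_left C).congr fun n => by ring
  have hgbound : ∀ nk : ℕ × ℕ,
      ‖g nk‖ ≤ (C * ((nk.1 : ℝ) + 2) * β ^ nk.1) * (Λ nk.2 * (nk.2:ℝ) ^ (-s)) := by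
    rintro ⟨n, k⟩
    have hnorm : ‖g (n, k)‖ = ‖bbCoeff f (n+1)‖ * Λ k * ((k:ℝ) ^ (-s)) ^ (n+1) := by
      rw [hg]
      simp only [norm_mul, norm_pow, Complex.norm_real, Real.norm_eq_abs,
        abs_of_nonneg vonMangoldt_nonneg, abs_of_nonneg (hxnn k)]
    by_cases hk2 : 2 ≤ k
    · have hbb : ‖bbCoeff f (n + 1)‖ ≤ C * ((n : ℝ) + 2) := by
        have := norm_bbCoeff_le hC (n + 1)
        push_cast at this ⊢
        linarith
      have hxp : ((k:ℝ) ^ (-s)) ^ (n+1) ≤ (k:ℝ) ^ (-s) * β ^ n := by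
        rw [pow_succ']
        refine mul_le_mul_of_nonneg_left ?_ (hxnn k)
        exact pow_le_pow_left₀ (hxnn k) (hxle k hk2) n
      calc ‖g (n, k)‖ = ‖bbCoeff f (n+1)‖ * Λ k * ((k:ℝ) ^ (-s)) ^ (n+1) := hnorm
        _ ≤ (C * ((n : ℝ) + 2)) * Λ k * ((k:ℝ) ^ (-s) * β ^ n) := by
            refine mul_le_mul (mul_le_mul_of_nonneg_right hbb vonMangoldt_nonneg) hxp
              (by positivity) (mul_nonneg (by positivity) vonMangoldt_nonneg)
        _ = (C * ((n : ℝ) + 2) * β ^ n) * (Λ k * (k:ℝ) ^ (-s)) := by ring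
    · have hΛ0 : Λ k = 0 := by
        interval_cases k
        · simp
        · simp [ArithmeticFunction.vonMangoldt_apply_one]
      rw [hnorm, hΛ0]
      simp
  have hgs : Summable g := by
    refine Summable.of_norm_bounded ?_ hgbound
    exact hv2.mul_of_nonneg hu (fun n => by positivity)
      (fun k => mul_nonneg vonMangoldt_nonneg (hxnn k))
  set S : ℂ := ∑' nk, g nk with hS
  have hgS : HasSum g S := hgs.hasSum
  -- exponents are > 1
  have hw : ∀ n : ℕ, 1 < ((n:ℝ) + 1) * s := by
    intro n
    have : (1:ℝ) * s ≤ ((n:ℝ) + 1) * s := by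
      refine mul_le_mul_of_nonneg_right ?_ hs0.le
      have := Nat.cast_nonneg (α := ℝ) n
      linarith
    linarith
  -- the fiberwise sums over n
  have hxpowrw : ∀ (k n : ℕ),
      ((((k : ℝ) ^ (-s) : ℝ)) ^ (n+1) : ℝ) = (k:ℝ) ^ (-(((n:ℝ) + 1) * s)) := by
    intro k n
    rw [hpow k (n+1)]
    push_cast
    ring_nf
  have hfibn : ∀ n : ℕ, HasSum (fun k => g (n, k))
      (bbCoeff f (n+1) * LSeries (fun m => ((Λ m : ℝ) : ℂ)) ((((n:ℝ) + 1) * s : ℝ) : ℂ)) := by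
    intro n
    have hsumn : LSeriesSummable (fun m => ((Λ m : ℝ) : ℂ)) ((((n:ℝ) + 1) * s : ℝ) : ℂ) :=
      ArithmeticFunction.LSeriesSummable_vonMangoldt (by simpa using hw n)
    have H := hsumn.hasSum.mul_left (bbCoeff f (n+1))
    refine H.congr_fun fun k => ?_
    rw [term_vonMangoldt_eq (((n:ℝ) + 1) * s) k]
    rw [hg]
    simp only
    rw [← hxpowrw k n]
    push_cast
    ring
  -- conjunct 2 precursor : HasSum over n
  have hTsum : HasSum (fun n =>
      bbCoeff f (n+1) * LSeries (fun m => ((Λ m : ℝ) : ℂ)) ((((n:ℝ) + 1) * s : ℝ) : ℂ)) S :=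
    hgS.prod_fiberwise hfibn
  -- the injection from prime powers
  set ι : Nat.Primes × ℕ × ℕ → ℕ × ℕ :=
    fun pjn => (pjn.2.2, (pjn.1 : ℕ) ^ (pjn.2.1 + 1)) with hι
  have hιinj : Function.Injective ι := by
    rintro ⟨p, j, n⟩ ⟨q, i, m⟩ h
    rw [hι] at h
    simp only [Prod.mk.injEq] at h
    obtain ⟨h1, h2⟩ := h
    have hdvd : (p : ℕ) ∣ (p : ℕ) ^ (j + 1) := dvd_pow_self _ (Nat.succ_ne_zero j)
    rw [h2] at hdvd
    have hpq : (p : ℕ) = (q : ℕ) :=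
      (Nat.prime_dvd_prime_iff_eq p.prop q.prop).mp (p.prop.dvd_of_dvd_pow hdvd)
    rw [hpq] at h2
    have hji : j + 1 = i + 1 := Nat.pow_right_injective q.prop.two_le h2
    simp only [Prod.mk.injEq]
    exact ⟨Subtype.ext hpq, by omega, h1⟩
  have hιrange : ∀ nk ∉ Set.range ι, g nk = 0 := by
    intro nk hnk
    by_contra hne
    apply hnk
    have hΛne : Λ nk.2 ≠ 0 := by
      intro h0
      apply hne
      rw [hg]
      simp [h0]
    obtain ⟨p, m, hp, hm, hpm⟩ := ArithmeticFunction.vonMangoldt_ne_zero_iff.mp hΛne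
    refine ⟨⟨⟨p, Nat.prime_iff.mpr hp⟩, m - 1, nk.1⟩, ?_⟩
    rw [hι]
    simp only
    rw [show m - 1 + 1 = m by omega, hpm]
  have hgι : HasSum (g ∘ ι) S := (hιinj.hasSum_iff hιrange).mpr hgS
  -- the per-prime fiberwise sums
  have hfibp : ∀ p : Nat.Primes, HasSum (fun jn : ℕ × ℕ => (g ∘ ι) (p, jn))
      (deriv f ((((p : ℕ) : ℝ) ^ (-s) : ℝ) : ℂ) * ((((p : ℕ) : ℝ) ^ (-s) : ℝ) : ℂ) *
        (Real.log ((p : ℕ) : ℝ) : ℂ)) := by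
    intro p
    set y : ℝ := ((p : ℕ) : ℝ) ^ (-s) with hy
    have hp2 : 2 ≤ (p : ℕ) := p.prop.two_le
    have hy0 : 0 ≤ y := hxnn _
    have hy1 : y < 1 := lt_of_le_of_lt (hxle _ hp2) hβ1
    have hyr : y < r := by linarith
    have base := (hasSum_prime_fiber hd hC hy0 hy1 hyr).mul_right ((Real.log ((p:ℕ):ℝ) : ℝ) : ℂ)
    refine base.congr_fun fun jn => ?_
    rcases jn with ⟨j, n⟩
    have hΛpp : Λ ((p:ℕ) ^ (j + 1)) = Real.log ((p:ℕ):ℝ) := by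
      rw [ArithmeticFunction.vonMangoldt_apply_pow (Nat.succ_ne_zero j),
        ArithmeticFunction.vonMangoldt_apply_prime p.prop]
    have hxpp : (((p:ℕ) ^ (j + 1) : ℕ) : ℝ) ^ (-s) = y ^ (j + 1) := by
      rw [hy, hpow ((p:ℕ)) (j+1)]
      push_cast
      rw [← Real.rpow_natCast ((p:ℕ):ℝ) (j+1), ← Real.rpow_mul (Nat.cast_nonneg _)]
      push_cast
      ring_nf
    rw [hg, hι]
    simp only [Function.comp_apply]
    rw [hΛpp, hxpp]
    push_cast
    rw [← pow_mul]
    ring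
  have hLHS : HasSum (fun p : Nat.Primes =>
      deriv f ((((p : ℕ) : ℝ) ^ (-s) : ℝ) : ℂ) * ((((p : ℕ) : ℝ) ^ (-s) : ℝ) : ℂ) *
        (Real.log ((p : ℕ) : ℝ) : ℂ)) S :=
    hgι.prod_fiberwise hfibp
  refine ⟨hLHS.summable, ?_⟩
  rw [hLHS.tsum_eq]
  have hfinal := hTsum.neg
  refine hfinal.congr_fun fun n => ?_
  rw [zeta_ratio_eq (hw n)]
  have : (∑ d ∈ (n + 1).divisors,
      (d : ℂ) * (iteratedDeriv d f 0 / (Nat.factorial d : ℂ)) *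
        (ArithmeticFunction.moebius ((n + 1) / d) : ℂ)) = bbCoeff f (n + 1) := rfl
  rw [this]
  ring
end

section
/- For every real s > 1, the prime zeta series satisfies ∑_{p prime} p^{−s} = ∑_{n=1}^{∞} (μ(n)/n) · log ζ(ns), where the series on the right converges absolutely. -/
set_option maxHeartbeats 1000000


open ArithmeticFunction in
/-- The inner summand: `μ(n+1)/((n+1)(k+1)) * q^((n+1)(k+1))`. -/
private noncomputable def fq (q : ℝ) : ℕ × ℕ → ℝ := fun nk =>
  ((moebius (nk.1 + 1) : ℤ) : ℝ) / ((((nk.1 + 1) * (nk.2 + 1) : ℕ)) : ℝ)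
    * q ^ ((nk.1 + 1) * (nk.2 + 1))

open ArithmeticFunction in
private lemma mu_sum_antidiagonal (m : ℕ) :
    ∑ ab ∈ m.divisorsAntidiagonal, ((moebius ab.1 : ℤ) : ℝ) = if m = 1 then 1 else 0 := by
  have h : ((↑moebius * ↑zeta : ArithmeticFunction ℝ)) m = (1 : ArithmeticFunction ℝ) m := by
    rw [coe_moebius_mul_coe_zeta]
  rw [mul_apply, one_apply] at h
  rw [← h]
  refine Finset.sum_congr rfl fun ab hab => ?_
  have h2 := (Nat.mem_divisorsAntidiagonal.mp hab).1
  have hm0 := (Nat.mem_divisorsAntidiagonal.mp hab).2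
  have hb0 : ab.2 ≠ 0 := by rintro h0; exact hm0 (by rw [← h2, h0, mul_zero])
  rw [intCoe_apply, natCoe_apply, zeta_apply, if_neg hb0]
  push_cast
  ring

open ArithmeticFunction in
private lemma abs_fq_le {q : ℝ} (hq0 : 0 ≤ q) (hq1 : q ≤ 1) (nk : ℕ × ℕ) :
    |fq q nk| ≤ q ^ (nk.1 + nk.2 + 1) := by
  obtain ⟨n, k⟩ := nk
  have hm : n + k + 1 ≤ (n + 1) * (k + 1) := by nlinarith
  have hc1 : (1 : ℝ) ≤ (((n + 1) * (k + 1) : ℕ) : ℝ) := by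
    exact_mod_cast Nat.one_le_iff_ne_zero.mpr (by positivity)
  have hμ : |((moebius (n + 1) : ℤ) : ℝ)| ≤ 1 := by
    exact_mod_cast (abs_moebius_le_one (n := n + 1))
  have h1 : |fq q (n, k)| =
      |((moebius (n + 1) : ℤ) : ℝ)| / (((n + 1) * (k + 1) : ℕ) : ℝ)
        * q ^ ((n + 1) * (k + 1)) := by
    rw [fq, abs_mul, abs_div, abs_of_nonneg (pow_nonneg hq0 _), Nat.abs_cast]
  rw [h1]
  calc |((moebius (n + 1) : ℤ) : ℝ)| / (((n + 1) * (k + 1) : ℕ) : ℝ)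
        * q ^ ((n + 1) * (k + 1))
      ≤ 1 * q ^ ((n + 1) * (k + 1)) := by
        refine mul_le_mul_of_nonneg_right ?_ (pow_nonneg hq0 _)
        rw [div_le_one (by linarith)]
        linarith
    _ = q ^ ((n + 1) * (k + 1)) := one_mul _
    _ ≤ q ^ (n + k + 1) := pow_le_pow_of_le_one hq0 hq1 hm

private lemma hasSum_geo2 {q : ℝ} (hq0 : 0 ≤ q) (hq1 : q < 1) :
    HasSum (fun nk : ℕ × ℕ => q ^ (nk.1 + nk.2 + 1)) (q * (1 - q)⁻¹ * (1 - q)⁻¹) := by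
  have h2 := hasSum_geometric_of_lt_one hq0 hq1
  have h1 : HasSum (fun n : ℕ => q * q ^ n) (q * (1 - q)⁻¹) := h2.mul_left q
  have hsum : Summable (fun x : ℕ × ℕ => (q * q ^ x.1) * q ^ x.2) :=
    h1.summable.mul_of_nonneg h2.summable (fun n => by positivity) (fun n => by positivity)
  have h3 := h1.mul h2 hsum
  convert h3 using 2 with nk
  rotate_left
  rw [pow_add, pow_add, pow_one]
  ring
  rfl

private lemma summable_abs_fq {q : ℝ} (hq0 : 0 ≤ q) (hq1 : q < 1) :
    Summable (fun nk : ℕ × ℕ => |fq q nk|) :=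
  Summable.of_nonneg_of_le (fun _ => abs_nonneg _) (abs_fq_le hq0 hq1.le)
    (hasSum_geo2 hq0 hq1).summable

private lemma tsum_abs_fq_le {q : ℝ} (hq0 : 0 < q) (hq : q ≤ 1 / 2) :
    ∑' nk : ℕ × ℕ, |fq q nk| ≤ 4 * q := by
  have hq1 : q < 1 := by linarith
  have hgeo := hasSum_geo2 hq0.le hq1
  have h1 : ∑' nk : ℕ × ℕ, |fq q nk| ≤ q * (1 - q)⁻¹ * (1 - q)⁻¹ := by
    rw [← hgeo.tsum_eq]
    exact Summable.tsum_le_tsum (abs_fq_le hq0.le hq1.le) (summable_abs_fq hq0.le hq1) hgeo.summable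
  have h3 : (0 : ℝ) ≤ (1 - q)⁻¹ := inv_nonneg.mpr (by linarith)
  have h2 : (1 - q)⁻¹ ≤ 2 := by
    have := inv_anti₀ (show (0:ℝ) < 1/2 by norm_num) (show 1/2 ≤ 1 - q by linarith)
    norm_num at this
    linarith
  have h4 : (1 - q)⁻¹ * (1 - q)⁻¹ ≤ 4 := by nlinarith
  calc ∑' nk : ℕ × ℕ, |fq q nk| ≤ q * (1 - q)⁻¹ * (1 - q)⁻¹ := h1
    _ = q * ((1 - q)⁻¹ * (1 - q)⁻¹) := by ring
    _ ≤ q * 4 := mul_le_mul_of_nonneg_left h4 hq0.le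
    _ = 4 * q := by ring

open ArithmeticFunction in
private lemma fiber_eq (q : ℝ) (m : ℕ) :
    (∑' b : ((fun nk : ℕ × ℕ => (nk.1 + 1) * (nk.2 + 1)) ⁻¹' {m}), fq q b)
      = (if m = 1 then q else 0) := by
  classical
  have hset : ((fun nk : ℕ × ℕ => (nk.1 + 1) * (nk.2 + 1)) ⁻¹' {m})
      = ↑((Finset.range m ×ˢ Finset.range m).filter
          (fun nk => (nk.1 + 1) * (nk.2 + 1) = m)) := by
    ext ⟨n, k⟩
    simp only [Set.mem_preimage, Set.mem_singleton_iff, Finset.coe_filter, Set.mem_setOf_eq,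
      Finset.mem_product, Finset.mem_range]
    constructor
    · intro h
      have h1 : n + 1 ≤ (n + 1) * (k + 1) := Nat.le_mul_of_pos_right _ (Nat.succ_pos k)
      have h2 : k + 1 ≤ (n + 1) * (k + 1) := Nat.le_mul_of_pos_left _ (Nat.succ_pos n)
      exact ⟨⟨by omega, by omega⟩, h⟩
    · exact fun h => h.2
  rw [hset, Finset.tsum_subtype']
  have h1 : ∑ x ∈ (Finset.range m ×ˢ Finset.range m).filter
        (fun nk => (nk.1 + 1) * (nk.2 + 1) = m), fq q x
      = ∑ ab ∈ m.divisorsAntidiagonal, ((moebius ab.1 : ℤ) : ℝ) / (m : ℝ) * q ^ m := by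
    refine Finset.sum_nbij' (fun nk : ℕ × ℕ => (nk.1 + 1, nk.2 + 1))
      (fun ab : ℕ × ℕ => (ab.1 - 1, ab.2 - 1)) ?_ ?_ ?_ ?_ ?_
    · intro a ha
      simp only [Finset.mem_filter, Finset.mem_product, Finset.mem_range] at ha
      refine Nat.mem_divisorsAntidiagonal.mpr ⟨ha.2, ?_⟩
      rw [← ha.2]
      positivity
    · intro ab hab
      obtain ⟨hprod, hm0⟩ := Nat.mem_divisorsAntidiagonal.mp hab
      have ha0 : ab.1 ≠ 0 := by rintro h0; exact hm0 (by rw [← hprod, h0, zero_mul])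
      have hb0 : ab.2 ≠ 0 := by rintro h0; exact hm0 (by rw [← hprod, h0, mul_zero])
      have ha1 : ab.1 ≤ m := by
        rw [← hprod]; exact Nat.le_mul_of_pos_right _ (Nat.pos_of_ne_zero hb0)
      have hb1 : ab.2 ≤ m := by
        rw [← hprod]; exact Nat.le_mul_of_pos_left _ (Nat.pos_of_ne_zero ha0)
      simp only [Finset.mem_filter, Finset.mem_product, Finset.mem_range]
      constructor
      · constructor <;> omega
      · have e1 : ab.1 - 1 + 1 = ab.1 := by omega
        have e2 : ab.2 - 1 + 1 = ab.2 := by omega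
        rw [e1, e2, hprod]
    · intro a _
      simp
    · intro ab hab
      obtain ⟨hprod, hm0⟩ := Nat.mem_divisorsAntidiagonal.mp hab
      have ha0 : ab.1 ≠ 0 := by rintro h0; exact hm0 (by rw [← hprod, h0, zero_mul])
      have hb0 : ab.2 ≠ 0 := by rintro h0; exact hm0 (by rw [← hprod, h0, mul_zero])
      ext <;> simp <;> omega
    · intro a ha
      simp only [Finset.mem_filter, Finset.mem_product, Finset.mem_range] at ha
      rw [fq, ha.2]
  rw [h1]
  have h2 : ∑ ab ∈ m.divisorsAntidiagonal, ((moebius ab.1 : ℤ) : ℝ) / (m : ℝ) * q ^ m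
      = (∑ ab ∈ m.divisorsAntidiagonal, ((moebius ab.1 : ℤ) : ℝ)) * ((m : ℝ)⁻¹ * q ^ m) := by
    rw [Finset.sum_mul]
    exact Finset.sum_congr rfl fun ab _ => by ring
  rw [h2, mu_sum_antidiagonal]
  by_cases hm : m = 1
  · subst hm; norm_num
  · rw [if_neg hm, if_neg hm, zero_mul]

private lemma hasSum_fq {q : ℝ} (hq0 : 0 ≤ q) (hq1 : q < 1) : HasSum (fq q) q := by
  have hs : Summable (fq q) := (summable_abs_fq hq0 hq1).of_abs
  have hfib := hs.hasSum.tsum_fiberwise (fun nk : ℕ × ℕ => (nk.1 + 1) * (nk.2 + 1))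
  have heq : (fun m : ℕ =>
      ∑' b : ((fun nk : ℕ × ℕ => (nk.1 + 1) * (nk.2 + 1)) ⁻¹' {m}), fq q b)
      = fun m => if m = 1 then q else 0 := funext (fiber_eq q)
  rw [heq] at hfib
  exact hs.hasSum_iff.mpr (hfib.unique (hasSum_ite_eq 1 q))

private lemma exp_eq_zetaR {x : ℝ} (hx : 1 < x) :
    Real.exp (∑' p : Nat.Primes, -Real.log (1 - ((p : ℕ) : ℝ) ^ (-x))) = zetaR x := by
  have hxC : 1 < (x : ℂ).re := by simpa using hx
  have hzeta : riemannZeta (x : ℂ) = ((zetaR x : ℝ) : ℂ) := by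
    rw [zeta_eq_tsum_one_div_nat_add_one_cpow hxC, zetaR, Complex.ofReal_tsum]
    refine (tsum_congr fun n => ?_).symm
    rw [Complex.ofReal_cpow (by positivity), one_div, ← Complex.cpow_neg]
    push_cast
    rfl
  have hterm : ∀ p : Nat.Primes, -Complex.log (1 - (p : ℂ) ^ (-(x : ℂ)))
      = ((-Real.log (1 - ((p : ℕ) : ℝ) ^ (-x)) : ℝ) : ℂ) := by
    intro p
    have hp1 : (1 : ℝ) < ((p : ℕ) : ℝ) := by exact_mod_cast p.prop.one_lt
    have hlt : ((p : ℕ) : ℝ) ^ (-x) < 1 :=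
      Real.rpow_lt_one_of_one_lt_of_neg hp1 (by linarith)
    have hcast : ((((p : ℕ) : ℝ) ^ (-x) : ℝ) : ℂ) = (p : ℂ) ^ (-(x : ℂ)) := by
      rw [Complex.ofReal_cpow (by positivity)]
      push_cast
      rfl
    rw [← hcast, ← Complex.ofReal_one, ← Complex.ofReal_sub,
      ← Complex.ofReal_log (by linarith), ← Complex.ofReal_neg]
  have h := riemannZeta_eulerProduct_exp_log hxC
  have hsum : (∑' p : Nat.Primes, -Complex.log (1 - (p : ℂ) ^ (-(x : ℂ))))
      = ((∑' p : Nat.Primes, -Real.log (1 - ((p : ℕ) : ℝ) ^ (-x)) : ℝ) : ℂ) := by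
    rw [Complex.ofReal_tsum]
    exact tsum_congr hterm
  rw [hsum, ← Complex.ofReal_exp, hzeta] at h
  exact_mod_cast h

private lemma log_zetaR_eq {x : ℝ} (hx : 1 < x) :
    Real.log (zetaR x) = ∑' p : Nat.Primes, -Real.log (1 - ((p : ℕ) : ℝ) ^ (-x)) := by
  rw [← exp_eq_zetaR hx, Real.log_exp]

/-- For every real `s > 1`,
`∑_{p prime} p^{-s} = ∑_{n ≥ 1} (μ(n)/n)·log ζ(ns)`, the right series converging absolutely. -/
theorem statement7 (s : ℝ) (hs : 1 < s) :
    Summable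
      (fun n : ℕ =>
        |(ArithmeticFunction.moebius (n + 1) : ℝ) / ((n : ℝ) + 1) *
          Real.log (zetaR (((n : ℝ) + 1) * s))|) ∧
    (∑' p : Nat.Primes, ((p : ℕ) : ℝ) ^ (-s)) =
      ∑' n : ℕ,
        (ArithmeticFunction.moebius (n + 1) : ℝ) / ((n : ℝ) + 1) *
          Real.log (zetaR (((n : ℝ) + 1) * s)) := by
  classical
  set Q : Nat.Primes → ℝ := fun p => ((p : ℕ) : ℝ) ^ (-s) with hQdef
  have hQpos : ∀ p, 0 < Q p := fun p =>
    Real.rpow_pos_of_pos (by exact_mod_cast p.prop.pos) _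
  have hQhalf : ∀ p, Q p ≤ 1 / 2 := by
    intro p
    have hp2 : (2 : ℝ) ≤ ((p : ℕ) : ℝ) := by exact_mod_cast p.prop.two_le
    have h2s : (2 : ℝ) ≤ ((p : ℕ) : ℝ) ^ s := by
      calc (2 : ℝ) = 2 ^ (1 : ℝ) := by rw [Real.rpow_one]
        _ ≤ 2 ^ s := Real.rpow_le_rpow_of_exponent_le one_le_two hs.le
        _ ≤ ((p : ℕ) : ℝ) ^ s := Real.rpow_le_rpow (by norm_num) hp2 (by linarith)
    have hQp : Q p = (((p : ℕ) : ℝ) ^ s)⁻¹ := by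
      show ((p : ℕ) : ℝ) ^ (-s) = _
      rw [Real.rpow_neg (by positivity)]
    rw [hQp]
    calc (((p : ℕ) : ℝ) ^ s)⁻¹ ≤ 2⁻¹ := inv_anti₀ two_pos h2s
      _ = 1 / 2 := by norm_num
  have hQlt : ∀ p, Q p < 1 := fun p => lt_of_le_of_lt (hQhalf p) (by norm_num)
  -- master function and its summability
  set G : Nat.Primes × (ℕ × ℕ) → ℝ := fun x => fq (Q x.1) x.2 with hGdef
  have hGabs : Summable (fun x : Nat.Primes × (ℕ × ℕ) => |G x|) := by
    have hnn : 0 ≤ fun x : Nat.Primes × (ℕ × ℕ) => |G x| := fun x => abs_nonneg _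
    refine (summable_prod_of_nonneg hnn).mpr
      ⟨fun p => summable_abs_fq (q := Q p) (hQpos p).le (hQlt p), ?_⟩
    refine Summable.of_nonneg_of_le (fun p => tsum_nonneg fun nk => abs_nonneg _)
      (fun p => tsum_abs_fq_le (q := Q p) (hQpos p) (hQhalf p)) ?_
    exact (Nat.Primes.summable_rpow.mpr (by linarith)).mul_left 4
  have hG : Summable G := hGabs.of_abs
  -- reindexing
  let e : ℕ × (Nat.Primes × ℕ) ≃ Nat.Primes × (ℕ × ℕ) :=
    ⟨fun x => (x.2.1, (x.1, x.2.2)), fun y => (y.2.1, (y.1, y.2.2)),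
      fun x => rfl, fun y => rfl⟩
  set H : ℕ × (Nat.Primes × ℕ) → ℝ := fun x => G (e x) with hHdef
  have hH : Summable H := e.summable_iff.mpr hG
  have hHabs : Summable (fun x => |H x|) := e.summable_iff.mpr hGabs
  -- power identity
  have hpow : ∀ (p : Nat.Primes) (n : ℕ),
      ((p : ℕ) : ℝ) ^ (-(((n : ℝ) + 1) * s)) = (Q p) ^ (n + 1) := by
    intro p n
    have hp0 : (0 : ℝ) ≤ ((p : ℕ) : ℝ) := by positivity
    rw [show -(((n : ℝ) + 1) * s) = (-s) * ((n + 1 : ℕ) : ℝ) by push_cast; ring,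
      Real.rpow_mul hp0, Real.rpow_natCast]
  -- per-n identity
  have hterm : ∀ n : ℕ,
      (ArithmeticFunction.moebius (n + 1) : ℝ) / ((n : ℝ) + 1) *
        Real.log (zetaR (((n : ℝ) + 1) * s))
      = ∑' pk : Nat.Primes × ℕ, H (n, pk) := by
    intro n
    have hxn : 1 < ((n : ℝ) + 1) * s := by
      have h1 : (0 : ℝ) ≤ (n : ℝ) := Nat.cast_nonneg n
      nlinarith
    set c : ℝ := (ArithmeticFunction.moebius (n + 1) : ℝ) / ((n : ℝ) + 1) with hcdef
    set Fn : Nat.Primes × ℕ → ℝ :=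
      fun pk => ((Q pk.1) ^ (n + 1)) ^ (pk.2 + 1) / ((pk.2 : ℝ) + 1) with hFdef
    have hGF : ∀ pk : Nat.Primes × ℕ, H (n, pk) = c * Fn pk := by
      rintro ⟨p, k⟩
      show fq (Q p) (n, k) = c * Fn (p, k)
      have hfq : fq (Q p) (n, k) = ((ArithmeticFunction.moebius (n + 1) : ℤ) : ℝ)
          / ((((n + 1) * (k + 1) : ℕ)) : ℝ) * Q p ^ ((n + 1) * (k + 1)) := rfl
      have hFnk : Fn (p, k) = ((Q p) ^ (n + 1)) ^ (k + 1) / ((k : ℝ) + 1) := rfl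
      have hcast : ((((n + 1) * (k + 1) : ℕ)) : ℝ) = ((n : ℝ) + 1) * ((k : ℝ) + 1) := by
        push_cast; ring
      rw [hfq, hFnk, hcdef, hcast, pow_mul]
      have hn0 : ((n : ℝ) + 1) ≠ 0 := by positivity
      have hk0 : ((k : ℝ) + 1) ≠ 0 := by positivity
      field_simp
      try ring
    have hlog : Real.log (zetaR (((n : ℝ) + 1) * s))
        = ∑' p : Nat.Primes, -Real.log (1 - (Q p) ^ (n + 1)) := by
      rw [log_zetaR_eq hxn]
      exact tsum_congr fun p => by rw [hpow p n]
    have hFn_inner : ∀ p : Nat.Primes,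
        HasSum (fun k : ℕ => Fn (p, k)) (-Real.log (1 - (Q p) ^ (n + 1))) := by
      intro p
      have habs : |(Q p) ^ (n + 1)| < 1 := by
        rw [abs_of_nonneg (pow_nonneg (hQpos p).le _)]
        exact pow_lt_one₀ (hQpos p).le (hQlt p) (Nat.succ_ne_zero n)
      have h := Real.hasSum_pow_div_log_of_abs_lt_one (x := (Q p) ^ (n + 1)) habs
      exact h.congr_fun fun k => rfl
    by_cases hμ : (ArithmeticFunction.moebius (n + 1) : ℝ) = 0
    · have hc0 : c = 0 := by rw [hcdef, hμ, zero_div]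
      rw [hc0, zero_mul]
      symm
      have : ∀ pk : Nat.Primes × ℕ, H (n, pk) = 0 := by
        intro pk; rw [hGF pk, hc0, zero_mul]
      simp only [this, tsum_zero]
    · have hc0 : c ≠ 0 := by
        rw [hcdef]
        exact div_ne_zero hμ (by positivity)
      have hFnsum : Summable Fn := by
        have h1 : Summable (fun pk : Nat.Primes × ℕ => H (n, pk)) := hH.prod_factor n
        have h2 : Summable (fun pk : Nat.Primes × ℕ => c⁻¹ * H (n, pk)) := h1.mul_left c⁻¹
        refine h2.congr fun pk => ?_
        rw [hGF pk, ← mul_assoc, inv_mul_cancel₀ hc0, one_mul]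
      calc c * Real.log (zetaR (((n : ℝ) + 1) * s))
          = c * ∑' p : Nat.Primes, -Real.log (1 - (Q p) ^ (n + 1)) := by rw [hlog]
        _ = c * ∑' p : Nat.Primes, ∑' k : ℕ, Fn (p, k) := by
            congr 1
            exact tsum_congr fun p => (hFn_inner p).tsum_eq.symm
        _ = c * ∑' pk : Nat.Primes × ℕ, Fn pk := by
            rw [Summable.tsum_prod' hFnsum fun p => (hFn_inner p).summable]
        _ = ∑' pk : Nat.Primes × ℕ, c * Fn pk := tsum_mul_left.symm
        _ = ∑' pk : Nat.Primes × ℕ, H (n, pk) := tsum_congr fun pk => (hGF pk).symm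
  constructor
  · -- absolute convergence
    have hsum2 : Summable (fun n : ℕ => ∑' pk : Nat.Primes × ℕ, |H (n, pk)|) :=
      ((summable_prod_of_nonneg (fun x => abs_nonneg _)).mp hHabs).2
    refine Summable.of_nonneg_of_le (fun n => abs_nonneg _) (fun n => ?_) hsum2
    rw [hterm n]
    have := norm_tsum_le_tsum_norm (f := fun pk : Nat.Primes × ℕ => H (n, pk))
      (hHabs.prod_factor n)
    simpa [Real.norm_eq_abs] using this
  · -- the identity
    have hinner : ∀ p : Nat.Primes, ∑' nk : ℕ × ℕ, G (p, nk) = Q p := fun p =>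
      (hasSum_fq (q := Q p) (hQpos p).le (hQlt p)).tsum_eq
    calc (∑' p : Nat.Primes, ((p : ℕ) : ℝ) ^ (-s))
        = ∑' p : Nat.Primes, Q p := rfl
      _ = ∑' p : Nat.Primes, ∑' nk : ℕ × ℕ, G (p, nk) := (tsum_congr hinner).symm
      _ = ∑' x : Nat.Primes × (ℕ × ℕ), G x := (Summable.tsum_prod' hG hG.prod_factor).symm
      _ = ∑' x : ℕ × (Nat.Primes × ℕ), H x := (e.tsum_eq G).symm
      _ = ∑' n : ℕ, ∑' pk : Nat.Primes × ℕ, H (n, pk) := Summable.tsum_prod' hH hH.prod_factor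
      _ = ∑' n : ℕ,
          (ArithmeticFunction.moebius (n + 1) : ℝ) / ((n : ℝ) + 1) *
            Real.log (zetaR (((n : ℝ) + 1) * s)) := (tsum_congr hterm).symm
end

section
/- Let s > 1 be real and M ≥ 1 an integer. Then |∑_{k=1}^{∞} p_k^{−s} − ∑_{n=1}^{M} (μ(n)/n) ∑_{k=1}^{∞} ∑_{l=1}^{∞} (1/l) p_k^{−snl}| ≤ (2^{s+2}(2^s + 1)(s + 1))/((2^s − 1)^3) · M^2 / ((sM + s − 1) 2^{sM}), where p_k denotes the k-th prime. -/
open Real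

local notation "pr" => fun k => Nat.nth Nat.Prime k

lemma two_le_pr (k : ℕ) : 2 ≤ Nat.nth Nat.Prime k :=
  (Nat.prime_nth_prime k).two_le

lemma add_two_le_pr (k : ℕ) : k + 2 ≤ Nat.nth Nat.Prime k := by
  induction k with
  | zero => simp [Nat.nth_prime_zero_eq_two]
  | succ n ih =>
    have h : Nat.nth Nat.Prime n < Nat.nth Nat.Prime (n+1) :=
      (Nat.nth_lt_nth Nat.infinite_setOf_prime).2 (Nat.lt_succ_self n)
    omega

lemma summable_pr_rpow {t : ℝ} (ht : 1 < t) :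
    Summable (fun k : ℕ => ((Nat.nth Nat.Prime k : ℕ) : ℝ) ^ (-t)) := by
  have h1 : Summable (fun k : ℕ => 1 / ((k : ℝ) + 2) ^ t) := by
    have := (Real.summable_one_div_nat_rpow (p := t)).2 ht
    have := (summable_nat_add_iff 2).2 this
    simpa using this
  refine h1.of_nonneg_of_le (fun k => rpow_nonneg (by positivity) _) (fun k => ?_)
  rw [rpow_neg (by positivity), one_div]
  apply inv_anti₀ (by positivity)
  apply rpow_le_rpow (by positivity) _ (by linarith)
  have := add_two_le_pr k
  exact_mod_cast this



lemma key_ineq {t b : ℝ} (ht : 2 ≤ t) (hb : 3 ≤ b) :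
    (t - 1) * b ^ (-t) ≤ (b - 1) ^ (1 - t) - b ^ (1 - t) := by
  have hb0 : (0:ℝ) < b := by linarith
  have hb1 : (0:ℝ) < b - 1 := by linarith
  set A := b ^ (t - 1) with hAdef
  set B := (b - 1) ^ (t - 1) with hBdef
  have hA : (0:ℝ) < A := rpow_pos_of_pos hb0 _
  have hB : (0:ℝ) < B := rpow_pos_of_pos hb1 _
  have h0 : (0:ℝ) ≤ 1 / (b - 1) := by positivity
  have hbern : 1 + (t - 1) * (1 / (b - 1)) ≤ (1 + 1 / (b - 1)) ^ (t - 1) :=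
    one_add_mul_self_le_rpow_one_add (by linarith) (by linarith)
  have heq : (1 + 1 / (b - 1)) = b / (b - 1) := by field_simp; ring
  rw [heq, Real.div_rpow hb0.le hb1.le] at hbern
  have h1 : (1 + (t - 1) * (1 / (b - 1))) * B ≤ A := (le_div_iff₀ hB).mp hbern
  have h3 : B * (b - 1) + (t - 1) * B ≤ A * (b - 1) := by
    have h2 := mul_le_mul_of_nonneg_right h1 hb1.le
    have h5 : (1 + (t - 1) * (1 / (b - 1))) * B * (b - 1)
        = B * (b - 1) + (t - 1) * B := by field_simp <;> ring
    linarith [h2, h5.symm.le]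
  have hAgeB : B ≤ A := by nlinarith [h3, hB, hb1]
  have h4 : (t - 1) * B ≤ (A - B) * b := by nlinarith [h3, hAgeB, hB]
  have e1 : (b - 1) ^ (1 - t) = B⁻¹ := by
    rw [hBdef, show (1:ℝ) - t = -(t-1) by ring, Real.rpow_neg hb1.le]
  have e2 : b ^ (1 - t) = A⁻¹ := by
    rw [hAdef, show (1:ℝ) - t = -(t-1) by ring, Real.rpow_neg hb0.le]
  have e3 : b ^ (-t) = A⁻¹ * b⁻¹ := by
    rw [hAdef, show -t = -(t-1) + (-1) by ring, Real.rpow_add hb0, Real.rpow_neg_one,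
      Real.rpow_neg hb0.le]
  rw [e1, e2, e3]
  have e4 : B⁻¹ - A⁻¹ = (A - B) / (B * A) := by
    field_simp
  rw [e4]
  have e5 : (t - 1) * (A⁻¹ * b⁻¹) = (t - 1) / (A * b) := by
    rw [div_eq_mul_inv, mul_inv]
  rw [e5, div_le_div_iff₀ (by positivity) (by positivity)]
  nlinarith [mul_le_mul_of_nonneg_left h4 hA.le, hA, hB, hb0]

lemma rpow_neg_anti {a c t : ℝ} (ha : 0 < a) (hac : a ≤ c) (ht : 0 ≤ t) :
    c ^ (-t) ≤ a ^ (-t) := by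
  rw [Real.rpow_neg (by linarith), Real.rpow_neg ha.le]
  exact inv_anti₀ (rpow_pos_of_pos ha _) (rpow_le_rpow ha.le hac ht)


lemma tsum_pr_rpow_le {t : ℝ} (ht : 2 ≤ t) :
    ∑' k : ℕ, ((Nat.nth Nat.Prime k : ℕ) : ℝ) ^ (-t) ≤ 2 ^ (-t) * ((t + 1) / (t - 1)) := by
  have ht1 : (1:ℝ) < t := by linarith
  have ht0 : (0:ℝ) < t - 1 := by linarith
  apply Summable.tsum_le_of_sum_le (summable_pr_rpow ht1)
  intro F
  obtain ⟨n, hFn⟩ := F.exists_nat_subset_range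
  have hnn : ∀ k : ℕ, 0 ≤ ((Nat.nth Nat.Prime k : ℕ):ℝ) ^ (-t) :=
    fun k => rpow_nonneg (by positivity) _
  refine le_trans (Finset.sum_le_sum_of_subset_of_nonneg hFn (fun k _ _ => hnn k)) ?_
  have hbound : (2:ℝ) ^ (-t) * ((t + 1) / (t - 1)) = 2 ^ (-t) + 2 ^ (1-t) / (t-1) := by
    have h2 : (2:ℝ) ^ (1-t) = 2 * 2 ^ (-t) := by
      rw [show (1:ℝ) - t = 1 + (-t) by ring, Real.rpow_add (by norm_num), Real.rpow_one]
    rw [h2]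
    field_simp
    ring
  rw [hbound]
  set f : ℕ → ℝ := fun k => ((k:ℝ) + 2) ^ (1 - t) with hf
  have hterm : ∀ k : ℕ, ((Nat.nth Nat.Prime (k+1) : ℕ):ℝ) ^ (-t) ≤ (f k - f (k+1)) / (t-1) := by
    intro k
    have hk3 : ((k:ℝ) + 3) ^ (-t) ≤ (f k - f (k+1)) / (t-1) := by
      rw [le_div_iff₀ ht0]
      have := key_ineq ht (b := (k:ℝ) + 3) (by norm_num)
      have e : ((k:ℝ) + 3) - 1 = (k:ℝ) + 2 := by ring
      rw [e] at this
      have e2 : ((k:ℝ) + 1) + 2 = (k:ℝ) + 3 := by push_cast; ring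
      simp only [hf]
      push_cast
      rw [show (k:ℝ) + 1 + 2 = (k:ℝ) + 3 by ring]
      linarith [this]
    refine le_trans ?_ hk3
    apply rpow_neg_anti (by positivity) ?_ (by linarith)
    have := add_two_le_pr (k+1)
    push_cast
    exact_mod_cast by exact_mod_cast Nat.cast_le.mpr this
  cases n with
  | zero => simp; positivity
  | succ m =>
    rw [Finset.sum_range_succ']
    have h0 : ((Nat.nth Nat.Prime 0 : ℕ):ℝ) ^ (-t) = 2 ^ (-t) := by
      rw [Nat.nth_prime_zero_eq_two]; norm_num
    rw [h0]
    have htail : ∑ k ∈ Finset.range m, ((Nat.nth Nat.Prime (k+1) : ℕ):ℝ) ^ (-t)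
        ≤ 2 ^ (1-t) / (t-1) := by
      calc ∑ k ∈ Finset.range m, ((Nat.nth Nat.Prime (k+1) : ℕ):ℝ) ^ (-t)
          ≤ ∑ k ∈ Finset.range m, (f k - f (k+1)) / (t-1) :=
            Finset.sum_le_sum (fun k _ => hterm k)
        _ = (f 0 - f m) / (t-1) := by
            rw [← Finset.sum_div, Finset.sum_range_sub' f m]
        _ ≤ f 0 / (t-1) := by
            have hfm : 0 ≤ f m := rpow_nonneg (by positivity) _
            gcongr
            linarith
        _ = 2 ^ (1-t) / (t-1) := by
            simp only [hf]; norm_num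
    linarith [htail]

lemma hasSum_log_series {x : ℝ} (h0 : 0 < x) (h1 : x < 1) :
    HasSum (fun l : ℕ => (1/((l:ℝ)+1)) * x ^ (l+1)) (-Real.log (1 - x)) := by
  have h := Real.hasSum_pow_div_log_of_abs_lt_one (x := x) (by rw [abs_of_pos h0]; exact h1)
  exact h.congr_fun (fun l => by ring)

lemma sum_divisors_moebius (N : ℕ) :
    (∑ d ∈ N.divisors, ArithmeticFunction.moebius d) = if N = 1 then 1 else 0 := by
  have h := congrArg (fun f => f N) ArithmeticFunction.moebius_mul_coe_zeta
  simp only [ArithmeticFunction.coe_mul_zeta_apply, ArithmeticFunction.one_apply] at h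
  exact h


lemma trunc_bound {x : ℝ} (h0 : 0 < x) (h1 : x < 1) (M : ℕ) (hM : 1 ≤ M) :
    |x - ∑ n ∈ Finset.Icc 1 M,
        ((ArithmeticFunction.moebius n : ℝ)/(n:ℝ)) * (-Real.log (1 - x^n))|
      ≤ x^(M+1) / (1 - x) := by
  set G : ℕ → ℕ → ℝ := fun n N =>
    if n ∈ N.divisors then (ArithmeticFunction.moebius n : ℝ) * x^N / N else 0 with hG
  have hGsum : ∀ n ∈ Finset.Icc 1 M, HasSum (G n)
      (((ArithmeticFunction.moebius n : ℝ)/(n:ℝ)) * (-Real.log (1 - x^n))) := by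
    intro n hn
    rw [Finset.mem_Icc] at hn
    have hn1 : 1 ≤ n := hn.1
    have hxn0 : 0 < x^n := pow_pos h0 n
    have hxn1 : x^n < 1 := pow_lt_one₀ h0.le h1 (by omega)
    have hls := (hasSum_log_series hxn0 hxn1).mul_left
      ((ArithmeticFunction.moebius n : ℝ)/(n:ℝ))
    have hinj : Function.Injective (fun m : ℕ => n * (m+1)) := by
      intro a b hab
      simp only at hab
      have := Nat.eq_of_mul_eq_mul_left (show 0 < n by omega) hab
      omega
    have hside : ∀ N ∉ Set.range (fun m : ℕ => n * (m+1)), G n N = 0 := by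
      intro N hN
      simp only [hG]
      rw [if_neg]
      intro hmem
      rw [Nat.mem_divisors] at hmem
      obtain ⟨⟨q, hq⟩, hN0⟩ := hmem
      refine hN ⟨q - 1, ?_⟩
      have hq0 : q ≠ 0 := by rintro rfl; simp at hq; omega
      show n * (q - 1 + 1) = N
      rw [Nat.sub_add_cancel (Nat.one_le_iff_ne_zero.mpr hq0)]
      omega
    have hcomp : HasSum (G n ∘ (fun m : ℕ => n * (m+1)))
        (((ArithmeticFunction.moebius n : ℝ)/(n:ℝ)) * (-Real.log (1 - x^n))) := by
      refine hls.congr_fun fun m => ?_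
      have hmem : n ∈ (n * (m+1)).divisors := by
        rw [Nat.mem_divisors]
        exact ⟨⟨m+1, rfl⟩, by positivity⟩
      simp only [Function.comp_apply, hG]
      rw [if_pos hmem, ← pow_mul]
      have hne : ((n:ℝ)) ≠ 0 := by positivity
      have hme : ((m:ℝ)) + 1 ≠ 0 := by positivity
      push_cast
      field_simp
      try ring
    exact (hinj.hasSum_iff hside).mp hcomp
  have hS : HasSum (fun N => ∑ n ∈ Finset.Icc 1 M, G n N)
      (∑ n ∈ Finset.Icc 1 M,
        ((ArithmeticFunction.moebius n : ℝ)/(n:ℝ)) * (-Real.log (1 - x^n))) :=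
    hasSum_sum hGsum
  have hE : HasSum (fun N : ℕ => if N = 1 then x else 0) x := hasSum_ite_eq 1 x
  have hD : HasSum (fun N : ℕ => (if N = 1 then x else 0) - ∑ n ∈ Finset.Icc 1 M, G n N)
      (x - ∑ n ∈ Finset.Icc 1 M,
        ((ArithmeticFunction.moebius n : ℝ)/(n:ℝ)) * (-Real.log (1 - x^n))) := hE.sub hS
  set D : ℕ → ℝ := fun N => (if N = 1 then x else 0) - ∑ n ∈ Finset.Icc 1 M, G n N with hDdef
  have hGrw : ∀ N : ℕ, ∑ n ∈ Finset.Icc 1 M, G n N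
      = ∑ n ∈ Finset.Icc 1 M ∩ N.divisors, (ArithmeticFunction.moebius n : ℝ) * x^N / N := by
    intro N
    rw [Finset.sum_ite_mem]
  have hDsmall : ∀ N : ℕ, N ≤ M → D N = 0 := by
    intro N hNM
    simp only [hDdef]
    rcases Nat.eq_zero_or_pos N with h | h
    · subst h
      simp [hGrw, Nat.divisors_zero]
    · have hsub : N.divisors ⊆ Finset.Icc 1 M := by
        intro d hd
        rw [Finset.mem_Icc]
        exact ⟨Nat.pos_of_mem_divisors hd, le_trans (Nat.divisor_le hd) hNM⟩
      rw [hGrw, Finset.inter_eq_right.mpr hsub, ← Finset.sum_div, ← Finset.sum_mul]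
      rw [show ∑ n ∈ N.divisors, (ArithmeticFunction.moebius n : ℝ)
          = ((∑ n ∈ N.divisors, ArithmeticFunction.moebius n : ℤ) : ℝ) by push_cast; ring]
      rw [sum_divisors_moebius N]
      rcases eq_or_ne N 1 with h1' | h1'
      · subst h1'; simp
      · simp [h1']
  have hDbig : ∀ N : ℕ, |D N| ≤ (if M + 1 ≤ N then x^N else 0) := by
    intro N
    rcases le_or_gt (M+1) N with hN | hN
    · have hN1 : N ≠ 1 := by omega
      have hN0 : 0 < N := by omega
      have hNc : (0:ℝ) < N := by exact_mod_cast hN0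
      simp only [hDdef, hN1, ite_false, zero_sub, abs_neg, if_pos hN]
      rw [hGrw]
      calc |∑ n ∈ Finset.Icc 1 M ∩ N.divisors, (ArithmeticFunction.moebius n : ℝ) * x^N / N|
          ≤ ∑ n ∈ Finset.Icc 1 M ∩ N.divisors,
            |(ArithmeticFunction.moebius n : ℝ) * x^N / N| := Finset.abs_sum_le_sum_abs _ _
        _ ≤ ∑ n ∈ Finset.Icc 1 M ∩ N.divisors, x^N / N := by
            refine Finset.sum_le_sum fun n _ => ?_
            rw [abs_div, abs_mul]
            have hmu : |(ArithmeticFunction.moebius n : ℝ)| ≤ 1 := by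
              rw [← Int.cast_abs]
              exact_mod_cast ArithmeticFunction.abs_moebius_le_one (n := n)
            rw [abs_of_pos (pow_pos h0 N), Nat.abs_cast]
            gcongr
            exact mul_le_of_le_one_left (pow_pos h0 N).le hmu
        _ = (Finset.Icc 1 M ∩ N.divisors).card * (x^N / N) := by
            rw [Finset.sum_const, nsmul_eq_mul]
        _ ≤ N * (x^N / N) := by
            apply mul_le_mul_of_nonneg_right ?_ (by positivity)
            have hcard : (Finset.Icc 1 M ∩ N.divisors).card ≤ N.divisors.card :=
              Finset.card_le_card (Finset.inter_subset_right)
            have hcard2 : N.divisors.card ≤ N := by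
              have hsub : N.divisors ⊆ Finset.Icc 1 N := fun d hd => by
                rw [Finset.mem_Icc]
                exact ⟨Nat.pos_of_mem_divisors hd, Nat.divisor_le hd⟩
              calc N.divisors.card ≤ (Finset.Icc 1 N).card := Finset.card_le_card hsub
                _ = N := by rw [Nat.card_Icc]; omega
            exact_mod_cast le_trans hcard hcard2
        _ = x^N := by
            field_simp
    · rw [if_neg (by omega), hDsmall N (by omega), abs_zero]
  have hH : HasSum (fun N : ℕ => if M + 1 ≤ N then x^N else 0) (x^(M+1) / (1-x)) := by
    have hgeo : HasSum (fun j : ℕ => x^(M+1) * x^j) (x^(M+1) * (1-x)⁻¹) :=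
      (hasSum_geometric_of_lt_one h0.le h1).mul_left _
    have hinj : Function.Injective (fun j : ℕ => j + (M+1)) := add_left_injective (M+1)
    have hside : ∀ N ∉ Set.range (fun j : ℕ => j + (M+1)),
        (if M + 1 ≤ N then x^N else 0) = 0 := by
      intro N hN
      rw [if_neg]
      intro hle
      refine hN ⟨N - (M+1), ?_⟩
      show N - (M+1) + (M+1) = N
      omega
    have hcomp : HasSum ((fun N : ℕ => if M + 1 ≤ N then x^N else 0) ∘ (fun j : ℕ => j + (M+1)))
        (x^(M+1) * (1-x)⁻¹) := by
      refine hgeo.congr_fun fun j => ?_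
      simp only [Function.comp_apply]
      rw [if_pos (by omega), pow_add]
      ring
    rw [div_eq_mul_inv]
    exact (hinj.hasSum_iff hside).mp hcomp
  rw [← hD.tsum_eq]
  have hDabs : Summable (fun N => |D N|) :=
    Summable.of_nonneg_of_le (fun N => abs_nonneg _) hDbig hH.summable
  have habs : ‖∑' N, D N‖ ≤ ∑' N, ‖D N‖ :=
    norm_tsum_le_tsum_norm (by simpa only [Real.norm_eq_abs] using hDabs)
  simp only [Real.norm_eq_abs] at habs
  calc |∑' N, D N| ≤ ∑' N, |D N| := habs
    _ ≤ ∑' N, (if M + 1 ≤ N then x^N else 0) := Summable.tsum_le_tsum hDbig hDabs hH.summable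
    _ = x^(M+1) / (1-x) := hH.tsum_eq

lemma neg_log_one_sub_le {y c : ℝ} (hy : 0 < y) (hyc : y ≤ c) (hc : c < 1) :
    -Real.log (1 - y) ≤ y / (1 - c) := by
  have h1y : 0 < 1 - y := by linarith
  have h1c : 0 < 1 - c := by linarith
  have h := Real.log_le_sub_one_of_pos (x := (1 - y)⁻¹) (by positivity)
  rw [Real.log_inv] at h
  have h2 : (1 - y)⁻¹ - 1 = y / (1 - y) := by field_simp; ring
  rw [h2] at h
  refine h.trans ?_
  gcongr

lemma neg_log_one_sub_nonneg {y : ℝ} (hy : 0 < y) (hy1 : y < 1) :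
    0 ≤ -Real.log (1 - y) := by
  have := Real.log_nonpos (by linarith) (by linarith : (1:ℝ) - y ≤ 1)
  linarith

lemma final_algebra {s : ℝ} (hs : 1 < s) {M : ℕ} (hM : 1 ≤ M) :
    (1 - (2:ℝ)^(-s))⁻¹ *
        ((2:ℝ)^(-(s*((M:ℝ)+1))) * ((s*((M:ℝ)+1) + 1)/(s*((M:ℝ)+1) - 1)))
      ≤ (2:ℝ)^(s+2) * ((2:ℝ)^s + 1) * (s+1) / ((2:ℝ)^s - 1)^3 *
          (M:ℝ)^2 / ((s*(M:ℝ) + s - 1) * (2:ℝ)^(s*(M:ℝ))) := by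
  set m : ℝ := (M:ℝ) with hm
  have hm1 : (1:ℝ) ≤ m := by rw [hm]; exact_mod_cast hM
  set a : ℝ := (2:ℝ)^s with ha
  set b : ℝ := (2:ℝ)^(s*m) with hb
  have ha2 : (2:ℝ) < a := by
    rw [ha]
    calc (2:ℝ) = 2^(1:ℝ) := (Real.rpow_one 2).symm
    _ < 2^s := Real.rpow_lt_rpow_left_iff (by norm_num) |>.mpr hs
  have hb0 : (0:ℝ) < b := rpow_pos_of_pos (by norm_num) _
  have hsm : (0:ℝ) < s*m + s - 1 := by nlinarith
  have hinv : (2:ℝ)^(-s) = a⁻¹ := by rw [ha, Real.rpow_neg (by norm_num)]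
  have hsplit : (2:ℝ)^(-(s*(m+1))) = (b*a)⁻¹ := by
    rw [Real.rpow_neg (by norm_num), show s*(m+1) = s*m + s by ring,
      Real.rpow_add (by norm_num)]
  have h4 : (2:ℝ)^(2:ℝ) = 4 := by
    rw [show (2:ℝ) = ((2:ℕ):ℝ) from by norm_num] ; rw [Real.rpow_natCast]; norm_num
  have h2s2 : (2:ℝ)^(s+2) = 4*a := by
    rw [Real.rpow_add (by norm_num : (0:ℝ) < 2), h4, ha]
    ring
  rw [hinv, hsplit, h2s2]
  have ha0 : (0:ℝ) < a := by linarith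
  have ha1 : (0:ℝ) < a - 1 := by linarith
  have hE : (1 - a⁻¹)⁻¹ * ((b*a)⁻¹ * ((s*(m+1) + 1)/(s*(m+1) - 1)))
      = (s*m+s+1) / ((a-1) * ((s*m+s-1)*b)) := by
    have hne : s*(m+1) - 1 ≠ 0 := by nlinarith
    field_simp
    try ring
  have hR : 4*a * (a + 1) * (s+1) / (a - 1)^3 * m^2 / ((s*m + s - 1) * b)
      = (4*a*(a+1)*(s+1)*m^2) / ((a-1)^3 * ((s*m+s-1)*b)) := by
    field_simp
    try ring
  rw [hE, hR]
  have core : (s*m+s+1)*(a-1)^2 ≤ 4*a*(a+1)*(s+1)*m^2 := by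
    have f1 : s*m+s+1 ≤ 2*(s+1)*m := by nlinarith
    have f2 : (a-1)^2 ≤ a*(a+1) := by nlinarith
    calc (s*m+s+1)*(a-1)^2 ≤ (2*(s+1)*m)*(a*(a+1)) := by
          apply mul_le_mul f1 f2 (by positivity) (by positivity)
      _ = (2*m)*((s+1)*(a*(a+1))) := by ring
      _ ≤ (4*m^2)*((s+1)*(a*(a+1))) := by
          have f3 : 2*m ≤ 4*m^2 := by nlinarith
          exact mul_le_mul_of_nonneg_right f3 (by positivity)
      _ = 4*a*(a+1)*(s+1)*m^2 := by ring
  rw [div_le_div_iff₀ (by positivity) (by positivity)]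
  have hz : (0:ℝ) ≤ (a-1) * ((s*m+s-1)*b) := by positivity
  calc (s*m+s+1) * ((a-1)^3 * ((s*m+s-1)*b))
      = ((s*m+s+1)*(a-1)^2) * ((a-1) * ((s*m+s-1)*b)) := by ring
    _ ≤ (4*a*(a+1)*(s+1)*m^2) * ((a-1) * ((s*m+s-1)*b)) :=
        mul_le_mul_of_nonneg_right core hz
    _ = 4*a*(a+1)*(s+1)*m^2 * ((a-1) * ((s*m+s-1)*b)) := by ring

/-- For real `s > 1` and integer `M ≥ 1`,
`|∑_k p_k^{-s} - ∑_{n ≤ M} (μ(n)/n) ∑_k ∑_l (1/l) p_k^{-snl}|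
  ≤ 2^{s+2}(2^s+1)(s+1)/(2^s-1)³ · M²/((sM+s-1)·2^{sM})`. -/
theorem statement8 (s : ℝ) (hs : 1 < s) (M : ℕ) (hM : 1 ≤ M) :
    |(∑' k : ℕ, ((Nat.nth Nat.Prime k : ℕ) : ℝ) ^ (-s)) -
        ∑ n ∈ Finset.Icc 1 M,
          ((ArithmeticFunction.moebius n : ℝ) / (n : ℝ)) *
            ∑' (k : ℕ) (l : ℕ),
              (1 / ((l : ℝ) + 1)) *
                ((Nat.nth Nat.Prime k : ℕ) : ℝ) ^ (-(s * (n : ℝ) * ((l : ℝ) + 1)))| ≤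
      (2 : ℝ) ^ (s + 2) * ((2 : ℝ) ^ s + 1) * (s + 1) / ((2 : ℝ) ^ s - 1) ^ 3 *
        (M : ℝ) ^ 2 / ((s * M + s - 1) * (2 : ℝ) ^ (s * M)) := by
  have hs0 : 0 < s := by linarith
  set pk : ℕ → ℝ := fun k => ((Nat.nth Nat.Prime k : ℕ) : ℝ) with hpk
  have hp2 : ∀ k, (2:ℝ) ≤ pk k := fun k => by
    simp only [hpk]; exact_mod_cast two_le_pr k
  have hp0 : ∀ k, (0:ℝ) < pk k := fun k => lt_of_lt_of_le two_pos (hp2 k)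
  have hxk0 : ∀ k, 0 < pk k ^ (-s) := fun k => rpow_pos_of_pos (hp0 k) _
  have hxkle : ∀ k, pk k ^ (-s) ≤ (2:ℝ)^(-s) :=
    fun k => rpow_neg_anti two_pos (hp2 k) hs0.le
  have h2s1 : (2:ℝ)^(-s) < 1 :=
    Real.rpow_lt_one_of_one_lt_of_neg one_lt_two (by linarith)
  have h2s0 : (0:ℝ) < 1 - (2:ℝ)^(-s) := by linarith
  have hxk1 : ∀ k, pk k ^ (-s) < 1 := fun k => lt_of_le_of_lt (hxkle k) h2s1
  -- rewrite the inner double sum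
  have hinner : ∀ n ∈ Finset.Icc 1 M, ∀ k : ℕ,
      (∑' l : ℕ, (1 / ((l : ℝ) + 1)) * pk k ^ (-(s * (n:ℝ) * ((l : ℝ) + 1))))
        = -Real.log (1 - (pk k ^ (-s))^n) := by
    intro n hn k
    rw [Finset.mem_Icc] at hn
    have hy0 : 0 < (pk k ^ (-s))^n := pow_pos (hxk0 k) n
    have hy1 : (pk k ^ (-s))^n < 1 := pow_lt_one₀ (hxk0 k).le (hxk1 k) (by omega)
    have hls := hasSum_log_series hy0 hy1
    refine (hls.congr_fun fun l => ?_).tsum_eq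
    congr 1
    rw [show -(s * (n:ℝ) * ((l:ℝ)+1)) = (-s) * ((n:ℝ) * ((l:ℝ)+1)) by ring,
      Real.rpow_mul (hp0 k).le, Real.rpow_mul (rpow_nonneg (hp0 k).le (-s)),
      Real.rpow_natCast]
    rw [show ((l:ℝ)+1) = (((l+1:ℕ)):ℝ) by push_cast; ring, Real.rpow_natCast]
  have hstep1 : ∑ n ∈ Finset.Icc 1 M,
      ((ArithmeticFunction.moebius n : ℝ) / (n : ℝ)) *
        ∑' (k : ℕ) (l : ℕ), (1 / ((l : ℝ) + 1)) * pk k ^ (-(s * (n:ℝ) * ((l : ℝ) + 1)))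
      = ∑ n ∈ Finset.Icc 1 M,
        ((ArithmeticFunction.moebius n : ℝ) / (n : ℝ)) *
          ∑' k : ℕ, -Real.log (1 - (pk k ^ (-s))^n) :=
    Finset.sum_congr rfl fun n hn => by rw [tsum_congr (hinner n hn)]
  -- summability facts
  have hsummx : Summable (fun k => pk k ^ (-s)) := summable_pr_rpow hs
  have hflog : ∀ n ∈ Finset.Icc 1 M,
      Summable (fun k => -Real.log (1 - (pk k ^ (-s))^n)) := by
    intro n hn
    rw [Finset.mem_Icc] at hn
    refine Summable.of_nonneg_of_le
      (fun k => neg_log_one_sub_nonneg (pow_pos (hxk0 k) n)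
        (pow_lt_one₀ (hxk0 k).le (hxk1 k) (by omega)))
      (fun k => ?_) (hsummx.mul_left (1 - (2:ℝ)^(-s))⁻¹)
    have hyle : (pk k ^ (-s))^n ≤ pk k ^ (-s) :=
      pow_le_of_le_one (hxk0 k).le (hxk1 k).le (by omega)
    calc -Real.log (1 - (pk k ^ (-s))^n)
        ≤ (pk k ^ (-s))^n / (1 - (2:ℝ)^(-s)) :=
          neg_log_one_sub_le (pow_pos (hxk0 k) n) (hyle.trans (hxkle k)) h2s1
      _ ≤ pk k ^ (-s) / (1 - (2:ℝ)^(-s)) := by gcongr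
      _ = (1 - (2:ℝ)^(-s))⁻¹ * (pk k ^ (-s)) := by ring
  -- exchange sum and tsum
  have hswap : ∑ n ∈ Finset.Icc 1 M,
      ((ArithmeticFunction.moebius n : ℝ) / (n : ℝ)) *
        ∑' k : ℕ, -Real.log (1 - (pk k ^ (-s))^n)
      = ∑' k : ℕ, ∑ n ∈ Finset.Icc 1 M,
        ((ArithmeticFunction.moebius n : ℝ) / (n : ℝ)) *
          (-Real.log (1 - (pk k ^ (-s))^n)) := by
    calc ∑ n ∈ Finset.Icc 1 M,
        ((ArithmeticFunction.moebius n : ℝ) / (n : ℝ)) *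
          ∑' k : ℕ, -Real.log (1 - (pk k ^ (-s))^n)
        = ∑ n ∈ Finset.Icc 1 M, ∑' k : ℕ,
            ((ArithmeticFunction.moebius n : ℝ) / (n : ℝ)) *
              (-Real.log (1 - (pk k ^ (-s))^n)) :=
          Finset.sum_congr rfl fun n hn => (tsum_mul_left).symm
      _ = ∑' k : ℕ, ∑ n ∈ Finset.Icc 1 M,
            ((ArithmeticFunction.moebius n : ℝ) / (n : ℝ)) *
              (-Real.log (1 - (pk k ^ (-s))^n)) :=
          (Summable.tsum_finsetSum (fun n hn => ((hflog n hn).mul_left _))).symm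
  have hsumG : Summable (fun k => ∑ n ∈ Finset.Icc 1 M,
      ((ArithmeticFunction.moebius n : ℝ) / (n : ℝ)) *
        (-Real.log (1 - (pk k ^ (-s))^n))) :=
    summable_sum (fun n hn => (hflog n hn).mul_left _)
  have hmain : (∑' k : ℕ, pk k ^ (-s)) -
      ∑ n ∈ Finset.Icc 1 M,
        ((ArithmeticFunction.moebius n : ℝ) / (n : ℝ)) *
          ∑' (k : ℕ) (l : ℕ), (1 / ((l : ℝ) + 1)) * pk k ^ (-(s * (n:ℝ) * ((l : ℝ) + 1)))
      = ∑' k : ℕ, (pk k ^ (-s) - ∑ n ∈ Finset.Icc 1 M,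
          ((ArithmeticFunction.moebius n : ℝ) / (n : ℝ)) *
            (-Real.log (1 - (pk k ^ (-s))^n))) := by
    rw [hstep1, hswap, Summable.tsum_sub hsummx hsumG]
  rw [hmain]
  -- per-prime bound
  set t : ℝ := s * ((M:ℝ) + 1) with hT
  have ht2 : 2 ≤ t := by
    have : (1:ℝ) ≤ (M:ℝ) := by exact_mod_cast hM
    nlinarith
  have hbnd : ∀ k, |pk k ^ (-s) - ∑ n ∈ Finset.Icc 1 M,
      ((ArithmeticFunction.moebius n : ℝ) / (n : ℝ)) *
        (-Real.log (1 - (pk k ^ (-s))^n))|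
      ≤ (1 - (2:ℝ)^(-s))⁻¹ * pk k ^ (-t) := by
    intro k
    refine (trunc_bound (hxk0 k) (hxk1 k) M hM).trans ?_
    have hpow : (pk k ^ (-s))^(M+1) = pk k ^ (-t) := by
      rw [← Real.rpow_natCast (pk k ^ (-s)) (M+1), ← Real.rpow_mul (hp0 k).le]
      congr 1
      push_cast
      ring
    rw [hpow, div_eq_mul_inv, mul_comm]
    apply mul_le_mul_of_nonneg_right ?_ (rpow_nonneg (hp0 k).le _)
    exact inv_anti₀ h2s0 (by linarith [hxkle k])
  have htsum : Summable (fun k => pk k ^ (-t)) := summable_pr_rpow (by linarith)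
  have hDabs : Summable (fun k => |pk k ^ (-s) - ∑ n ∈ Finset.Icc 1 M,
      ((ArithmeticFunction.moebius n : ℝ) / (n : ℝ)) *
        (-Real.log (1 - (pk k ^ (-s))^n))|) :=
    Summable.of_nonneg_of_le (fun k => abs_nonneg _) hbnd (htsum.mul_left _)
  have habs : |∑' k : ℕ, (pk k ^ (-s) - ∑ n ∈ Finset.Icc 1 M,
      ((ArithmeticFunction.moebius n : ℝ) / (n : ℝ)) *
        (-Real.log (1 - (pk k ^ (-s))^n)))|
      ≤ ∑' k : ℕ, |pk k ^ (-s) - ∑ n ∈ Finset.Icc 1 M,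
        ((ArithmeticFunction.moebius n : ℝ) / (n : ℝ)) *
          (-Real.log (1 - (pk k ^ (-s))^n))| := by
    have := norm_tsum_le_tsum_norm (f := fun k => pk k ^ (-s) - ∑ n ∈ Finset.Icc 1 M,
      ((ArithmeticFunction.moebius n : ℝ) / (n : ℝ)) *
        (-Real.log (1 - (pk k ^ (-s))^n))) (by simpa only [Real.norm_eq_abs] using hDabs)
    simpa only [Real.norm_eq_abs] using this
  refine habs.trans ?_
  calc ∑' k : ℕ, |pk k ^ (-s) - ∑ n ∈ Finset.Icc 1 M,
        ((ArithmeticFunction.moebius n : ℝ) / (n : ℝ)) *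
          (-Real.log (1 - (pk k ^ (-s))^n))|
      ≤ ∑' k : ℕ, (1 - (2:ℝ)^(-s))⁻¹ * pk k ^ (-t) :=
        Summable.tsum_le_tsum hbnd hDabs (htsum.mul_left _)
    _ = (1 - (2:ℝ)^(-s))⁻¹ * ∑' k : ℕ, pk k ^ (-t) := tsum_mul_left
    _ ≤ (1 - (2:ℝ)^(-s))⁻¹ * ((2:ℝ)^(-t) * ((t + 1)/(t - 1))) := by
        gcongr
        exact tsum_pr_rpow_le ht2
    _ ≤ _ := final_algebra hs hM
end
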